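/- arXiv:1412.8083 — 8 statements merged into one kernel-verified Lean document; each statement's English description precedes it below -/
import Mathlib

section
/- If G is a graph on n vertices that contains no cycle of length ℓ (ℓ ≥ 3), then the number of triangles in G is at most (ℓ - 3)/3 times the number of edges of G. -/
set_option linter.unusedSectionVars false
set_option maxHeartbeats 1000000

/-- `G` contains no cycle of length `ℓ`. -/
def CycleFree {V : Type*} (G : SimpleGraph V) (ℓ : ℕ) : Prop :=
  ∀ (v : V) (c : G.Walk v v), c.IsCycle → c.length ≠ ℓ

namespace EGaux
open List Finset



variable {V : Type*} [Fintype V] [DecidableEq V] (G : SimpleGraph V) [DecidableRel G.Adj]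

/-- Number of neighbors of `v` inside `s`. -/
def ndeg (s : Finset V) (v : V) : ℕ := (s.filter (fun u => G.Adj v u)).card

/-- Sum of degrees within `s` (twice the number of edges inside `s`). -/
def D (s : Finset V) : ℕ := ∑ v ∈ s, ndeg G s v

/-- A "good" list: a path. -/
def Good (s : Finset V) (l : List V) : Prop :=
  l.Chain' G.Adj ∧ l.Nodup ∧ ∀ x ∈ l, x ∈ s

def HasPath (s : Finset V) (k : ℕ) : Prop :=
  ∃ l : List V, Good G s l ∧ l.length = k

variable {G}

lemma Good.length_le {s : Finset V} {l : List V} (h : Good G s l) : l.length ≤ s.card := by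
  classical
  calc l.length = l.toFinset.card := (List.toFinset_card_of_nodup h.2.1).symm
    _ ≤ s.card := Finset.card_le_card (fun x hx => h.2.2 x (List.mem_toFinset.mp hx))

lemma Good.mono {s t : Finset V} {l : List V} (hst : s ⊆ t) (h : Good G s l) : Good G t l :=
  ⟨h.1, h.2.1, fun x hx => hst (h.2.2 x hx)⟩

lemma hasPath_of_le {s : Finset V} {k : ℕ} {l : List V} (h : Good G s l) (hk : k ≤ l.length) :
    HasPath G s k := by
  refine ⟨l.take k, ⟨h.1.take k, h.2.1.sublist (List.take_sublist _ _),
    fun x hx => h.2.2 x (List.mem_of_mem_take hx)⟩, ?_⟩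
  simp [List.length_take, Nat.min_eq_left hk]

lemma hasPath_mono {s t : Finset V} {k : ℕ} (hst : s ⊆ t) (h : HasPath G s k) :
    HasPath G t k := by
  obtain ⟨l, hl, hlen⟩ := h
  exact ⟨l, hl.mono hst, hlen⟩

lemma ndeg_le_card_sub_one {s : Finset V} {v : V} (hv : v ∈ s) : ndeg G s v ≤ s.card - 1 := by
  have hsub : s.filter (fun u => G.Adj v u) ⊆ s.erase v := by
    intro u hu
    simp only [Finset.mem_filter] at hu
    exact Finset.mem_erase.mpr ⟨(G.adj_symm hu.2).ne, hu.1⟩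
  calc ndeg G s v ≤ (s.erase v).card := Finset.card_le_card hsub
    _ = s.card - 1 := Finset.card_erase_of_mem hv

lemma ndeg_erase_self {s : Finset V} (v : V) : ndeg G (s.erase v) v = ndeg G s v := by
  unfold ndeg
  congr 1
  ext u
  simp only [Finset.mem_filter, Finset.mem_erase]
  exact ⟨fun h => ⟨h.1.2, h.2⟩, fun h => ⟨⟨(G.adj_symm h.2).ne, h.1⟩, h.2⟩⟩

lemma D_erase {s : Finset V} {v : V} (hv : v ∈ s) :
    D G s = D G (s.erase v) + 2 * ndeg G s v := by
  have hsplit : D G s = ndeg G s v + ∑ u ∈ s.erase v, ndeg G s u := by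
    rw [D, ← Finset.add_sum_erase _ _ hv]
  have hstep : ∀ u ∈ s.erase v,
      ndeg G s u = ndeg G (s.erase v) u + (if G.Adj u v then 1 else 0) := by
    intro u _
    have hs : s = insert v (s.erase v) := (Finset.insert_erase hv).symm
    conv_lhs => rw [ndeg, hs, Finset.filter_insert]
    split_ifs with h
    · rw [Finset.card_insert_of_notMem (by simp), ndeg]
    · rw [ndeg, Nat.add_zero]
  have hsum : ∑ u ∈ s.erase v, ndeg G s u
      = D G (s.erase v) + ∑ u ∈ s.erase v, (if G.Adj u v then 1 else 0) := by
    rw [D, ← Finset.sum_add_distrib]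
    exact Finset.sum_congr rfl hstep
  have hind : ∑ u ∈ s.erase v, (if G.Adj u v then 1 else 0) = ndeg G s v := by
    rw [← Finset.card_filter]
    rw [← ndeg_erase_self v, ndeg]
    congr 1
    ext u
    simp only [Finset.mem_filter]
    exact ⟨fun h => ⟨h.1, G.adj_symm h.2⟩, fun h => ⟨h.1, G.adj_symm h.2⟩⟩
  rw [hsplit, hsum, hind]
  ring

lemma D_split {s C : Finset V} (hCs : C ⊆ s)
    (hclosed : ∀ a ∈ C, ∀ b ∈ s, G.Adj a b → b ∈ C) :
    D G s = D G C + D G (s \ C) := by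
  have h1 : ∀ u ∈ C, ndeg G s u = ndeg G C u := by
    intro u hu
    unfold ndeg
    congr 1
    ext w
    simp only [Finset.mem_filter]
    exact ⟨fun h => ⟨hclosed u hu w h.1 h.2, h.2⟩, fun h => ⟨hCs h.1, h.2⟩⟩
  have h2 : ∀ u ∈ s \ C, ndeg G s u = ndeg G (s \ C) u := by
    intro u hu
    rw [Finset.mem_sdiff] at hu
    unfold ndeg
    congr 1
    ext w
    simp only [Finset.mem_filter, Finset.mem_sdiff]
    refine ⟨fun h => ⟨⟨h.1, fun hwC => ?_⟩, h.2⟩, fun h => ⟨h.1.1, h.2⟩⟩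
    · exact hu.2 (hclosed w hwC u hu.1 (G.adj_symm h.2))
  have : D G s = ∑ u ∈ C, ndeg G s u + ∑ u ∈ s \ C, ndeg G s u := by
    rw [D, ← Finset.sum_sdiff hCs, Nat.add_comm]
  rw [this, Finset.sum_congr rfl h1, Finset.sum_congr rfl h2, D, D]


open List Finset



/-- Reachability from `v` within `s`. -/
inductive Reach (G : SimpleGraph V) (s : Finset V) (v : V) : V → Prop
  | base : v ∈ s → Reach G s v v
  | step {u w : V} : Reach G s v u → G.Adj u w → w ∈ s → Reach G s v w

lemma getLast?_eq_getLastD' {α : Type*} : ∀ {l : List α}, l ≠ [] → ∀ d : α, l.getLast? = some (l.getLastD d)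
  | [], h, _ => absurd rfl h
  | [a], _, d => rfl
  | a :: b :: l, _, d => by
    rw [List.getLast?_cons_cons, List.getLastD_cons, getLast?_eq_getLastD' (List.cons_ne_nil _ _) a]

lemma Reach.mem_s {s : Finset V} {v u : V} (h : Reach G s v u) : u ∈ s := by
  cases h with
  | base h => exact h
  | step _ _ h => exact h

/-- From reachability we get a chain from `v` to `u` all of whose vertices are reachable. -/
lemma Reach.chain {s : Finset V} {v u : V} (h : Reach G s v u) :
    ∃ l : List V, List.Chain G.Adj v l ∧ (∀ x ∈ l, Reach G s v x) ∧ l.getLastD v = u := by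
  induction h with
  | base _ => exact ⟨[], List.Chain.nil, by simp, rfl⟩
  | @step u w hu hadj hw ih =>
    obtain ⟨l, hchain, hmem, hlast⟩ := ih
    refine ⟨l ++ [w], ?_, ?_, ?_⟩
    · have h1 : List.Chain' G.Adj (v :: l) := hchain
      have h2 : List.Chain' G.Adj ((v :: l) ++ [w]) := by
        rw [List.Chain', List.isChain_append]
        refine ⟨h1, List.isChain_singleton w, ?_⟩
        intro x hx y hy
        simp only [List.head?_cons, Option.mem_some_iff] at hy
        subst hy
        have hsome : (v :: l).getLast? = some (l.getLastD v) := by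
          cases l with
          | nil => rfl
          | cons a l' =>
            rw [List.getLast?_cons_cons, List.getLastD_cons,
              getLast?_eq_getLastD' (List.cons_ne_nil _ _) a, List.getLastD_cons]
        rw [hsome, Option.mem_some_iff] at hx
        subst hx
        rw [hlast]
        exact hadj
      exact h2
    · intro x hx
      rcases List.mem_append.mp hx with hx | hx
      · exact hmem x hx
      · simp only [List.mem_singleton] at hx
        subst hx
        exact Reach.step hu hadj hw
    · rw [List.getLastD_concat]

/-- Scanning a chain from a vertex satisfying `P` to one not satisfying it finds a
boundary edge. -/
lemma boundary_scan (P : V → Prop) :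
    ∀ (l : List V) (x : V), List.Chain G.Adj x l → P x → ¬ P (l.getLastD x) →
      ∃ a b, G.Adj a b ∧ P a ∧ ¬ P b ∧ b ∈ x :: l := by
  intro l
  induction l with
  | nil => intro x _ hx hlast; exact absurd hx hlast
  | cons y l' ih =>
    intro x hchain hx hlast
    rw [List.Chain, List.chain_cons] at hchain
    by_cases hy : P y
    · obtain ⟨a, b, h1, h2, h3, h4⟩ := ih y hchain.2 hy (by rwa [List.getLastD_cons] at hlast)
      exact ⟨a, b, h1, h2, h3, List.mem_cons_of_mem _ h4⟩
    · exact ⟨x, y, hchain.1, hx, hy, by simp⟩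


lemma boundary_scan' (P : V → Prop) {l : List V} (hne : l ≠ []) (hchain : List.Chain' G.Adj l)
    (hhead : ∀ x ∈ l.head?, P x) (hlast : ∀ x ∈ l.getLast?, ¬ P x) :
    ∃ a b, G.Adj a b ∧ P a ∧ ¬ P b ∧ b ∈ l := by
  cases l with
  | nil => exact absurd rfl hne
  | cons x l' =>
    have hx : P x := hhead x (by simp)
    have hsome : (x :: l').getLast? = some (l'.getLastD x) := by
      rw [getLast?_eq_getLastD' (List.cons_ne_nil _ _) x, List.getLastD_cons]
    have hlx : ¬ P (l'.getLastD x) := hlast _ (by rw [hsome]; rfl)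
    exact boundary_scan P l' x hchain hx hlx

lemma longpath {k : ℕ} (hk : 2 ≤ k) {C : Finset V} {v : V} (hv : v ∈ C)
    (hmin : ∀ u ∈ C, k - 1 ≤ 2 * ndeg G C u)
    (hconn : ∀ u ∈ C, ∃ l : List V, List.Chain G.Adj v l ∧ (∀ x ∈ l, x ∈ C) ∧ l.getLastD v = u)
    (hnp : ¬ HasPath G C k) : C.card ≤ k - 1 := by
  classical
  by_contra hbig
  have hkC : k ≤ C.card := by omega
  set M := Nat.findGreatest (HasPath G C) C.card with hM
  have hP1 : HasPath G C 1 :=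
    ⟨[v], ⟨List.isChain_singleton v, List.nodup_singleton v, by simpa using hv⟩, rfl⟩
  have hM1 : 1 ≤ M := Nat.le_findGreatest (by omega) hP1
  have hPM : HasPath G C M := Nat.findGreatest_spec (m := 1) (by omega) hP1
  have hmax : ∀ l' : List V, Good G C l' → l'.length ≤ M := fun l' hl' =>
    Nat.le_findGreatest hl'.length_le ⟨l', hl', rfl⟩
  obtain ⟨l, hgood, hlen⟩ := hPM
  obtain ⟨hchain, hnodup, hmemC⟩ := hgood
  set m := M - 1 with hm
  have hlen' : l.length = m + 1 := by omega
  have hMk : M ≤ k - 1 := by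
    by_contra hMk
    exact hnp (hasPath_of_le ⟨hchain, hnodup, hmemC⟩ (by omega))
  have h0 : 0 < l.length := by omega
  have hmlt : m < l.length := by omega
  obtain ⟨a, ha⟩ : ∃ x, l[0]'h0 = x := ⟨_, rfl⟩
  obtain ⟨b, hb⟩ : ∃ x, l[m]'hmlt = x := ⟨_, rfl⟩
  have haC : a ∈ C := ha ▸ hmemC _ (l.getElem_mem h0)
  have hbC : b ∈ C := hb ▸ hmemC _ (l.getElem_mem hmlt)
  have hlne : l ≠ [] := by intro h; rw [h] at h0; simp at h0
  have hheadl : l.head? = some a := by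
    rw [List.head?_eq_head hlne, List.head_eq_getElem_zero, ha]
  have hlastl : l.getLast? = some b := by
    have hidx : l.length - 1 = m := by omega
    rw [List.getLast?_eq_getLast hlne, List.getLast_eq_getElem]
    simp only [hidx, hb]
  have hEnda : ∀ w ∈ C, G.Adj a w → w ∈ l := by
    intro w hw hadj
    by_contra hwl
    have hgood' : Good G C (w :: l) := by
      refine ⟨List.isChain_cons.mpr ⟨fun y hy => ?_, hchain⟩,
        List.nodup_cons.mpr ⟨hwl, hnodup⟩, ?_⟩
      · rw [hheadl, Option.mem_some_iff] at hy; subst hy; exact G.adj_symm hadj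
      · intro x hx
        rcases List.mem_cons.mp hx with rfl | hx
        · exact hw
        · exact hmemC x hx
    have := hmax _ hgood'
    simp only [List.length_cons, hlen'] at this
    omega
  have hEndb : ∀ w ∈ C, G.Adj b w → w ∈ l := by
    intro w hw hadj
    by_contra hwl
    have hgood' : Good G C (l ++ [w]) := by
      refine ⟨List.isChain_append.mpr ⟨hchain, List.isChain_singleton w, ?_⟩, ?_, ?_⟩
      · intro x hx y hy
        rw [hlastl, Option.mem_some_iff] at hx
        simp only [List.head?_cons, Option.mem_some_iff] at hy
        subst hx; subst hy; exact hadj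
      · rw [List.nodup_append']
        refine ⟨hnodup, List.nodup_singleton w, ?_⟩
        intro x hx hx'
        simp only [List.mem_singleton] at hx'
        subst hx'
        exact hwl hx
      · intro x hx
        rcases List.mem_append.mp hx with hx | hx
        · exact hmemC x hx
        · simp only [List.mem_singleton] at hx; subst hx; exact hw
    have := hmax _ hgood'
    simp only [List.length_append, List.length_singleton, hlen'] at this
    omega
  set A := (Finset.range m).filter (fun i => G.Adj a (l.getD (i+1) a)) with hAdef
  set B := (Finset.range m).filter (fun i => G.Adj b (l.getD i b)) with hBdef
  have hAcard : A.card = ndeg G C a := by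
    show A.card = (C.filter (fun u => G.Adj a u)).card
    apply Finset.card_bij (fun i _ => l.getD (i+1) a)
    · intro i hi
      simp only [hAdef, Finset.mem_filter, Finset.mem_range] at hi
      have hi1 : i + 1 < l.length := by omega
      rw [List.getD_eq_getElem _ _ hi1] at hi ⊢
      exact Finset.mem_filter.mpr ⟨hmemC _ (l.getElem_mem hi1), hi.2⟩
    · intro i hi j hj hij
      simp only [hAdef, Finset.mem_filter, Finset.mem_range] at hi hj
      have hi1 : i + 1 < l.length := by omega
      have hj1 : j + 1 < l.length := by omega
      rw [List.getD_eq_getElem _ _ hi1, List.getD_eq_getElem _ _ hj1] at hij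
      have := (List.Nodup.getElem_inj_iff hnodup).mp hij
      omega
    · intro w hw
      simp only [Finset.mem_filter] at hw
      have hwl : w ∈ l := hEnda w hw.1 hw.2
      obtain ⟨j, hjlt, hjw⟩ := List.mem_iff_getElem.mp hwl
      have hj0 : j ≠ 0 := by
        intro h; subst h
        have haw : a = w := by rw [← ha, hjw]
        exact G.irrefl (haw ▸ hw.2)
      refine ⟨j - 1, ?_, ?_⟩
      · simp only [hAdef, Finset.mem_filter, Finset.mem_range]
        have hj1 : j - 1 + 1 = j := by omega
        constructor
        · omega
        · rw [hj1, List.getD_eq_getElem _ _ hjlt, hjw]; exact hw.2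
      · have hj1 : j - 1 + 1 = j := by omega
        rw [hj1, List.getD_eq_getElem _ _ hjlt, hjw]
  have hBcard : B.card = ndeg G C b := by
    show B.card = (C.filter (fun u => G.Adj b u)).card
    apply Finset.card_bij (fun i _ => l.getD i b)
    · intro i hi
      simp only [hBdef, Finset.mem_filter, Finset.mem_range] at hi
      have hi1 : i < l.length := by omega
      rw [List.getD_eq_getElem _ _ hi1] at hi ⊢
      exact Finset.mem_filter.mpr ⟨hmemC _ (l.getElem_mem hi1), hi.2⟩
    · intro i hi j hj hij
      simp only [hBdef, Finset.mem_filter, Finset.mem_range] at hi hj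
      have hi1 : i < l.length := by omega
      have hj1 : j < l.length := by omega
      rw [List.getD_eq_getElem _ _ hi1, List.getD_eq_getElem _ _ hj1] at hij
      exact (List.Nodup.getElem_inj_iff hnodup).mp hij
    · intro w hw
      simp only [Finset.mem_filter] at hw
      have hwl : w ∈ l := hEndb w hw.1 hw.2
      obtain ⟨j, hjlt, hjw⟩ := List.mem_iff_getElem.mp hwl
      have hjm : j ≠ m := by
        intro h; subst h
        have hbw : b = w := by rw [← hb, hjw]
        exact G.irrefl (hbw ▸ hw.2)
      refine ⟨j, ?_, ?_⟩
      · simp only [hBdef, Finset.mem_filter, Finset.mem_range]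
        constructor
        · omega
        · rw [List.getD_eq_getElem _ _ hjlt, hjw]; exact hw.2
      · rw [List.getD_eq_getElem _ _ hjlt, hjw]
  have hsum : k - 1 ≤ ndeg G C a + ndeg G C b := by
    have h1 := hmin a haC
    have h2 := hmin b hbC
    omega
  have hABrange : A ∪ B ⊆ Finset.range m :=
    Finset.union_subset (Finset.filter_subset _ _) (Finset.filter_subset _ _)
  have hinter : (A ∩ B).Nonempty := by
    rw [← Finset.card_pos]
    have h1 := Finset.card_union_add_card_inter A B
    have h2 : (A ∪ B).card ≤ m := by
      simpa using Finset.card_le_card hABrange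
    omega
  obtain ⟨i, hiAB⟩ := hinter
  rw [Finset.mem_inter] at hiAB
  obtain ⟨hiA, hiB⟩ := hiAB
  simp only [hAdef, hBdef, Finset.mem_filter, Finset.mem_range] at hiA hiB
  have him : i < m := hiA.1
  have hi1 : i + 1 < l.length := by omega
  have hilt : i < l.length := by omega
  have hAi : G.Adj a (l[i+1]'hi1) := by
    have := hiA.2
    rwa [List.getD_eq_getElem _ _ hi1] at this
  have hBi : G.Adj b (l[i]'hilt) := by
    have := hiB.2
    rwa [List.getD_eq_getElem _ _ hilt] at this
  -- build the cycle list
  have hflip : (flip G.Adj) = G.Adj := by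
    funext x y
    exact propext (G.adj_comm y x)
  have hlt : (l.take (i+1)).length = i + 1 := by
    rw [List.length_take]; omega
  have hld : (l.drop (i+1)).length = m - i := by
    rw [List.length_drop]; omega
  have htne : l.take (i+1) ≠ [] := by
    intro h; rw [h] at hlt; simp at hlt
  have hdne : l.drop (i+1) ≠ [] := by
    intro h; rw [h] at hld; simp at hld; omega
  obtain ⟨c, hcdef⟩ : ∃ c, (l.take (i+1)).reverse ++ l.drop (i+1) = c := ⟨_, rfl⟩
  have hcperm : c ~ l := by
    rw [← hcdef]
    calc (l.take (i+1)).reverse ++ l.drop (i+1) ~ l.take (i+1) ++ l.drop (i+1) :=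
      List.Perm.append_right _ (List.reverse_perm _)
    _ = l := List.take_append_drop _ _
  have hcnodup : c.Nodup := hcperm.nodup_iff.mpr hnodup
  have hcmem : ∀ x, (x ∈ c ↔ x ∈ l) := fun x => hcperm.mem_iff
  have hclen : c.length = m + 1 := by rw [hcperm.length_eq, hlen']
  have htrev : List.Chain' G.Adj (l.take (i+1)).reverse := by
    rw [List.Chain', List.isChain_reverse, show (fun a b => G.Adj b a) = G.Adj from hflip]
    exact hchain.take _
  have hthead : (l.take (i+1)).head? = some a := by
    rw [List.head?_eq_head htne, List.head_eq_getElem_zero]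
    rw [← ha]
    congr 1
    exact List.getElem_take
  have hdhead : (l.drop (i+1)).head? = some (l[i+1]'hi1) := by
    rw [List.head?_drop, List.getElem?_eq_getElem hi1]
  have hchainc : c.Chain' G.Adj := by
    rw [← hcdef, List.Chain', List.isChain_append]
    refine ⟨htrev, hchain.drop _, ?_⟩
    intro x hx y hy
    rw [List.getLast?_reverse, hthead, Option.mem_some_iff] at hx
    rw [hdhead, Option.mem_some_iff] at hy
    subst hx; subst hy
    exact hAi
  have hchead : c.head? = some (l[i]'hilt) := by
    rw [← hcdef, List.head?_append_of_ne_nil _]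
    · rw [List.head?_reverse, List.getLast?_eq_getLast htne, List.getLast_eq_getElem]
      have hidx : (l.take (i+1)).length - 1 = i := by omega
      simp only [hidx]
      congr 1
      exact List.getElem_take
    · simpa using htne
  have hclast : c.getLast? = some b := by
    rw [← hcdef, List.getLast?_append_of_ne_nil _ hdne]
    have h2 : l.getLast? = (l.drop (i+1)).getLast? := by
      conv_lhs => rw [← List.take_append_drop (i+1) l]
      exact List.getLast?_append_of_ne_nil _ hdne
    rw [← h2, hlastl]
  -- a vertex outside the cycle
  have hout : ∃ w ∈ C, w ∉ c := by
    by_contra hall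
    push_neg at hall
    have hsub : C ⊆ c.toFinset := fun x hx => List.mem_toFinset.mpr (hall x hx)
    have hcard := Finset.card_le_card hsub
    have htf : c.toFinset.card ≤ c.length := c.toFinset_card_le
    omega
  obtain ⟨w, hwC, hwc⟩ := hout
  -- find a boundary edge from the cycle to the outside
  have hedge : ∃ z u : V, G.Adj z u ∧ z ∈ c ∧ u ∉ c ∧ u ∈ C := by
    by_cases hvc : v ∈ c
    · obtain ⟨lw, hlwchain, hlwC, hlwlast⟩ := hconn w hwC
      obtain ⟨z, u, h1, h2, h3, h4⟩ := boundary_scan (fun x => x ∈ c) lw v hlwchain hvc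
        (by rw [hlwlast]; exact hwc)
      refine ⟨z, u, h1, h2, h3, ?_⟩
      rcases List.mem_cons.mp h4 with rfl | h4
      · exact hv
      · exact hlwC u h4
    · obtain ⟨la, hlachain, hlaC, hlalast⟩ := hconn a haC
      have hrev : List.Chain' G.Adj ((v :: la).reverse) := by
        rw [List.Chain', List.isChain_reverse, show (fun a b => G.Adj b a) = G.Adj from hflip]
        exact hlachain
      have hne' : (v :: la).reverse ≠ [] := by simp
      have hhead : ∀ x ∈ ((v :: la).reverse).head?, x ∈ c := by
        intro x hx
        rw [List.head?_reverse] at hx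
        have hla : (v :: la).getLast? = some a := by
          rw [getLast?_eq_getLastD' (List.cons_ne_nil _ _) v, List.getLastD_cons, hlalast]
        rw [hla, Option.mem_some_iff] at hx
        subst hx
        exact (hcmem _).mpr (ha ▸ List.getElem_mem h0)
      have hlast2 : ∀ x ∈ ((v :: la).reverse).getLast?, ¬ x ∈ c := by
        intro x hx
        rw [List.getLast?_reverse, List.head?_cons, Option.mem_some_iff] at hx
        subst hx
        exact hvc
      obtain ⟨z, u, h1, h2, h3, h4⟩ := boundary_scan' (fun x => x ∈ c) hne' hrev hhead hlast2
      refine ⟨z, u, h1, h2, h3, ?_⟩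
      rw [List.mem_reverse] at h4
      rcases List.mem_cons.mp h4 with rfl | h4
      · exact hv
      · exact hlaC u h4
  obtain ⟨z, u, hzu, hzc, huc, huC⟩ := hedge
  -- rotate the cycle to start at z and extend by u
  obtain ⟨c₁, c₂, hcsplit⟩ := List.append_of_mem hzc
  have hr : List.Chain' G.Adj (z :: (c₂ ++ c₁)) := by
    have h1 := hchainc
    rw [hcsplit, List.Chain', List.isChain_append] at h1
    rw [show z :: (c₂ ++ c₁) = (z :: c₂) ++ c₁ from rfl, List.Chain', List.isChain_append]
    refine ⟨h1.2.1, h1.1, ?_⟩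
    intro x hx y hy
    have hxc : c.getLast? = some x := by
      rw [hcsplit, List.getLast?_append_of_ne_nil _ (List.cons_ne_nil _ _)]
      exact hx
    have hc1ne : c₁ ≠ [] := by
      intro h; rw [h] at hy; simp at hy
    have hyc : c.head? = some y := by
      rw [hcsplit, List.head?_append_of_ne_nil _ hc1ne]
      exact hy
    rw [hclast, Option.some.injEq] at hxc
    rw [hchead, Option.some.injEq] at hyc
    subst hxc; subst hyc
    exact hBi
  have hrperm : (z :: (c₂ ++ c₁)) ~ c := by
    rw [hcsplit, ← List.cons_append]
    exact List.perm_append_comm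
  have hnew : Good G C (u :: (z :: (c₂ ++ c₁))) := by
    refine ⟨List.isChain_cons.mpr ⟨fun y hy => ?_, hr⟩, ?_, ?_⟩
    · simp only [List.head?_cons, Option.mem_some_iff] at hy
      subst hy
      exact G.adj_symm hzu
    · rw [List.nodup_cons]
      exact ⟨fun hmem => huc (hrperm.mem_iff.mp hmem), hrperm.nodup_iff.mpr hcnodup⟩
    · intro x hx
      rcases List.mem_cons.mp hx with rfl | hx
      · exact huC
      · exact hmemC _ ((hcmem x).mp (hrperm.mem_iff.mp hx))
  have hfin := hmax _ hnew
  have hlen2 : (u :: (z :: (c₂ ++ c₁))).length = m + 2 := by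
    have := hrperm.length_eq
    simp only [List.length_cons] at this ⊢
    omega
  omega

lemma ndeg_filter_eq {s C : Finset V} (hCs : C ⊆ s)
    (hclosed : ∀ x ∈ C, ∀ y ∈ s, G.Adj x y → y ∈ C) {u : V} (hu : u ∈ C) :
    ndeg G C u = ndeg G s u := by
  unfold ndeg
  congr 1
  ext w
  simp only [Finset.mem_filter]
  exact ⟨fun h => ⟨hCs h.1, h.2⟩, fun h => ⟨hclosed u hu w h.1 h.2, h.2⟩⟩

theorem EG {k : ℕ} (hk : 2 ≤ k) :
    ∀ (n : ℕ) (s : Finset V), s.card ≤ n → ¬ HasPath G s k → D G s ≤ (k - 2) * s.card := by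
  intro n
  induction n with
  | zero =>
    intro s hs _
    have : s = ∅ := Finset.card_eq_zero.mp (by omega)
    subst this
    simp [D]
  | succ n ih =>
    intro s hs hnp
    by_cases hlow : ∃ v ∈ s, 2 * ndeg G s v ≤ k - 2
    · obtain ⟨v, hv, hdeg⟩ := hlow
      have hpos : 0 < s.card := Finset.card_pos.mpr ⟨v, hv⟩
      have herase : (s.erase v).card ≤ n := by
        rw [Finset.card_erase_of_mem hv]; omega
      have h1 := ih (s.erase v) herase (fun h => hnp (hasPath_mono (Finset.erase_subset _ _) h))
      rw [D_erase hv]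
      have hcard : s.card = (s.erase v).card + 1 := by
        rw [Finset.card_erase_of_mem hv]; omega
      calc D G (s.erase v) + 2 * ndeg G s v ≤ (k - 2) * (s.erase v).card + (k - 2) :=
            Nat.add_le_add h1 hdeg
        _ = (k - 2) * s.card := by rw [hcard]; ring
    · push_neg at hlow
      rcases Finset.eq_empty_or_nonempty s with rfl | ⟨v, hv⟩
      · simp [D]
      · have hmin : ∀ u ∈ s, k - 1 ≤ 2 * ndeg G s u := fun u hu => by
          have := hlow u hu; omega
        classical
        obtain ⟨C, hCdef⟩ : ∃ C, s.filter (fun u => Reach G s v u) = C := ⟨_, rfl⟩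
        have hCs : C ⊆ s := hCdef ▸ Finset.filter_subset _ _
        have hvC : v ∈ C := by
          rw [← hCdef, Finset.mem_filter]; exact ⟨hv, Reach.base hv⟩
        have hclosed : ∀ x ∈ C, ∀ y ∈ s, G.Adj x y → y ∈ C := by
          intro x hx y hy hadj
          rw [← hCdef, Finset.mem_filter] at hx ⊢
          exact ⟨hy, Reach.step hx.2 hadj hy⟩
        have hminC : ∀ u ∈ C, k - 1 ≤ 2 * ndeg G C u := fun u hu => by
          rw [ndeg_filter_eq hCs hclosed hu]; exact hmin u (hCs hu)
        have hconn : ∀ u ∈ C, ∃ l, List.Chain G.Adj v l ∧ (∀ x ∈ l, x ∈ C) ∧ l.getLastD v = u := by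
          intro u hu
          rw [← hCdef, Finset.mem_filter] at hu
          obtain ⟨l, h1, h2, h3⟩ := hu.2.chain
          refine ⟨l, h1, fun x hx => ?_, h3⟩
          rw [← hCdef, Finset.mem_filter]
          exact ⟨(h2 x hx).mem_s, h2 x hx⟩
        have hnpC : ¬ HasPath G C k := fun h => hnp (hasPath_mono hCs h)
        have hCk := longpath hk hvC hminC hconn hnpC
        have hDC : D G C ≤ (k - 2) * C.card := by
          rw [D]
          calc ∑ u ∈ C, ndeg G C u ≤ ∑ _u ∈ C, (k - 2) :=
              Finset.sum_le_sum (fun u hu => by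
                have h1 := ndeg_le_card_sub_one (G := G) hu
                omega)
            _ = (k - 2) * C.card := by rw [Finset.sum_const, smul_eq_mul, mul_comm]
        have hCpos : 0 < C.card := Finset.card_pos.mpr ⟨v, hvC⟩
        have hsdcard := Finset.card_sdiff_of_subset hCs
        have hCle := Finset.card_le_card hCs
        have hsd : (s \ C).card ≤ n := by omega
        have hDsd := ih (s \ C) hsd (fun h => hnp (hasPath_mono Finset.sdiff_subset h))
        rw [D_split hCs hclosed]
        have hcards : C.card + (s \ C).card = s.card := by omega
        calc D G C + D G (s \ C) ≤ (k - 2) * C.card + (k - 2) * (s \ C).card :=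
            Nat.add_le_add hDC hDsd
          _ = (k - 2) * s.card := by rw [← hcards]; ring



def walkOfChain : ∀ (l : List V) (x : V), List.Chain G.Adj x l → G.Walk x (l.getLastD x)
  | [], _, _ => SimpleGraph.Walk.nil
  | b :: l', x, h =>
      (SimpleGraph.Walk.cons (List.chain_cons.mp h).1
        (walkOfChain l' b (show List.Chain G.Adj b l' from (List.chain_cons.mp h).2))).copy rfl (List.getLastD_cons (a := x) (b := b) (l := l')).symm

lemma walkOfChain_support (l : List V) : ∀ (x : V) (h : List.Chain G.Adj x l),
    (walkOfChain l x h).support = x :: l := by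
  induction l with
  | nil => intro x h; rfl
  | cons b l' ih =>
      intro x h
      rw [walkOfChain, SimpleGraph.Walk.support_copy, SimpleGraph.Walk.support_cons, ih]

lemma walkOfChain_length (l : List V) : ∀ (x : V) (h : List.Chain G.Adj x l),
    (walkOfChain l x h).length = l.length := by
  induction l with
  | nil => intro x h; rfl
  | cons b l' ih =>
      intro x h
      rw [walkOfChain, SimpleGraph.Walk.length_copy, SimpleGraph.Walk.length_cons, ih]
      simp






lemma walkOfChain_edge_start (l : List V) (x c : V) (h : List.Chain G.Adj x l)
    (hmem : s(c, x) ∈ (walkOfChain l x h).edges) :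
    x ∈ l ∨ (∃ y, l.head? = some y ∧ c = y) := by
  cases l with
  | nil => change s(c, x) ∈ ([] : List (Sym2 V)) at hmem; simp at hmem
  | cons y l' =>
    rw [walkOfChain, SimpleGraph.Walk.edges_copy, SimpleGraph.Walk.edges_cons] at hmem
    rcases List.mem_cons.mp hmem with heq | hmem'
    · rw [Sym2.eq_iff] at heq
      rcases heq with ⟨rfl, rfl⟩ | ⟨rfl, -⟩
      · exact Or.inl (by simp)
      · exact Or.inr ⟨c, by simp, rfl⟩
    · left
      have := SimpleGraph.Walk.snd_mem_support_of_mem_edges _ hmem'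
      rwa [walkOfChain_support] at this


lemma noPath_neighbor {ℓ : ℕ} (hl3 : 3 ≤ ℓ) (hG : CycleFree G ℓ) (v : V) :
    ¬ HasPath G (G.neighborFinset v) (ℓ - 1) := by
  rintro ⟨l, ⟨hchain, hnodup, hmem⟩, hlen⟩
  have hmemN : ∀ x ∈ l, G.Adj v x := fun x hx =>
    (G.mem_neighborFinset v x).mp (hmem x hx)
  have hvl : v ∉ l := fun h => G.irrefl (hmemN v h)
  have hlen2 : 2 ≤ l.length := by omega
  obtain ⟨y, l', rfl⟩ : ∃ y l', l = y :: l' := by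
    cases l with
    | nil => simp at hlen2
    | cons a b => exact ⟨a, b, rfl⟩
  have hl'ne : l' ≠ [] := by
    intro h; subst h; simp at hlen2
  have hchain2 : List.Chain G.Adj v (y :: l') :=
    List.chain_cons.mpr ⟨hmemN y (by simp), hchain⟩
  have hbeq : (y :: l').getLastD v = l'.getLast hl'ne := by
    rw [List.getLastD_cons]
    have h1 : l'.getLast? = some (l'.getLastD y) := by
      rw [List.getLast?_eq_getLast hl'ne]
      congr 1
      rw [List.getLastD_eq_getLast?, List.getLast?_eq_getLast hl'ne]
      rfl
    rw [List.getLast?_eq_getLast hl'ne, Option.some.injEq] at h1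
    exact h1.symm
  have hbl' : (y :: l').getLastD v ∈ l' := by
    rw [hbeq]; exact List.getLast_mem hl'ne
  have hby : (y :: l').getLastD v ≠ y := by
    intro h
    have := List.nodup_cons.mp hnodup
    exact this.1 (h ▸ hbl')
  have hadjvb : G.Adj v ((y :: l').getLastD v) := hmemN _ (List.mem_cons_of_mem _ hbl')
  have hpath : (walkOfChain (y :: l') v hchain2).IsPath := by
    rw [SimpleGraph.Walk.isPath_def, walkOfChain_support]
    exact List.nodup_cons.mpr ⟨hvl, hnodup⟩
  have hedge : s((y :: l').getLastD v, v) ∉ (walkOfChain (y :: l') v hchain2).edges := by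
    intro hmem'
    rcases walkOfChain_edge_start _ _ _ _ hmem' with h | ⟨y', hy', hcy⟩
    · exact hvl h
    · simp only [List.head?_cons, Option.some.injEq] at hy'
      exact hby (hy' ▸ hcy)
  have hcyc : (SimpleGraph.Walk.cons hadjvb.symm (walkOfChain (y :: l') v hchain2)).IsCycle :=
    (SimpleGraph.Walk.cons_isCycle_iff _ _).mpr ⟨hpath, hedge⟩
  have hlencyc : (SimpleGraph.Walk.cons hadjvb.symm (walkOfChain (y :: l') v hchain2)).length = ℓ := by
    rw [SimpleGraph.Walk.length_cons, walkOfChain_length]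
    simp only [List.length_cons] at hlen ⊢
    omega
  exact hG _ _ hcyc hlencyc



lemma card_ordered_triangles :
    ((Finset.univ : Finset (V × V × V)).filter
      (fun p => G.Adj p.1 p.2.1 ∧ G.Adj p.1 p.2.2 ∧ G.Adj p.2.1 p.2.2)).card
      = 6 * (G.cliqueFinset 3).card := by
  rw [Finset.card_eq_sum_card_fiberwise
    (f := fun p : V × V × V => ({p.1, p.2.1, p.2.2} : Finset V)) (t := G.cliqueFinset 3)
    (fun p hp => by
      simp only [Finset.mem_coe, Finset.mem_filter] at hp
      exact (G.mem_cliqueFinset_iff).mpr (SimpleGraph.is3Clique_triple_iff.mpr hp.2))]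
  rw [Finset.sum_congr rfl (fun t ht => ?_), Finset.sum_const, smul_eq_mul, mul_comm]
  -- each fiber has 6 elements
  have hclique := (G.mem_cliqueFinset_iff).mp ht
  obtain ⟨x, y, z, hxy, hxz, hyz, rfl⟩ := Finset.card_eq_three.mp hclique.card_eq
  obtain ⟨haxy, haxz, hayz⟩ := SimpleGraph.is3Clique_triple_iff.mp hclique
  have : (Finset.filter (fun p : V × V × V => ({p.1, p.2.1, p.2.2} : Finset V) = {x, y, z})
      (Finset.filter (fun p => G.Adj p.1 p.2.1 ∧ G.Adj p.1 p.2.2 ∧ G.Adj p.2.1 p.2.2) Finset.univ))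
      = {(x,y,z), (x,z,y), (y,x,z), (y,z,x), (z,x,y), (z,y,x)} := by
    ext ⟨a, b, c⟩
    simp only [Finset.mem_filter, Finset.mem_univ, true_and, Finset.mem_insert,
      Finset.mem_singleton, Prod.mk.injEq]
    constructor
    · rintro ⟨⟨hab, hac, hbc⟩, hset⟩
      have ha : a = x ∨ a = y ∨ a = z := by
        have : a ∈ ({x, y, z} : Finset V) := hset ▸ (by simp)
        simpa using this
      have hb : b = x ∨ b = y ∨ b = z := by
        have : b ∈ ({x, y, z} : Finset V) := hset ▸ (by simp)
        simpa using this
      have hc : c = x ∨ c = y ∨ c = z := by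
        have : c ∈ ({x, y, z} : Finset V) := hset ▸ (by simp)
        simpa using this
      have h1 := hab.ne
      have h2 := hac.ne
      have h3 := hbc.ne
      rcases ha with rfl | rfl | rfl <;> rcases hb with rfl | rfl | rfl <;>
        rcases hc with rfl | rfl | rfl <;> simp_all
    · rintro (⟨rfl, rfl, rfl⟩ | ⟨rfl, rfl, rfl⟩ | ⟨rfl, rfl, rfl⟩ | ⟨rfl, rfl, rfl⟩ |
        ⟨rfl, rfl, rfl⟩ | ⟨rfl, rfl, rfl⟩)
      · exact ⟨⟨haxy, haxz, hayz⟩, rfl⟩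
      · exact ⟨⟨haxz, haxy, hayz.symm⟩, by ext w; simp; tauto⟩
      · exact ⟨⟨haxy.symm, hayz, haxz⟩, by ext w; simp; tauto⟩
      · exact ⟨⟨hayz, haxy.symm, haxz.symm⟩, by ext w; simp; tauto⟩
      · exact ⟨⟨haxz.symm, hayz.symm, haxy⟩, by ext w; simp; tauto⟩
      · exact ⟨⟨hayz.symm, haxz.symm, haxy.symm⟩, by ext w; simp; tauto⟩
  rw [this]
  have hyx : y ≠ x := hxy.symm
  have hzx : z ≠ x := hxz.symm
  have hzy : z ≠ y := hyz.symm
  repeat rw [Finset.card_insert_of_notMem (by simp [Prod.ext_iff, hxy, hxz, hyz, hyx, hzx, hzy])]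
  simp

lemma sum_D_eq :
    ∑ v : V, D G (G.neighborFinset v) =
    ((Finset.univ : Finset (V × V × V)).filter
      (fun p => G.Adj p.1 p.2.1 ∧ G.Adj p.1 p.2.2 ∧ G.Adj p.2.1 p.2.2)).card := by
  rw [Finset.card_filter, Fintype.sum_prod_type]
  refine Finset.sum_congr rfl (fun v _ => ?_)
  rw [Fintype.sum_prod_type]
  rw [D, SimpleGraph.neighborFinset_eq_filter, Finset.sum_filter]
  refine Finset.sum_congr rfl (fun u _ => ?_)
  by_cases h : G.Adj v u
  · rw [if_pos h, ndeg, Finset.filter_filter, Finset.card_filter]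
    refine Finset.sum_congr rfl (fun w _ => ?_)
    by_cases h2 : G.Adj v w ∧ G.Adj u w
    · rw [if_pos h2, if_pos ⟨h, h2.1, h2.2⟩]
    · rw [if_neg h2, if_neg (fun hc => h2 ⟨hc.2.1, hc.2.2⟩)]
  · rw [if_neg h]
    symm
    apply Finset.sum_eq_zero
    intro w _
    rw [if_neg (fun hc => h hc.1)]

theorem key (G : SimpleGraph V) [DecidableRel G.Adj] {ℓ : ℕ} (hl3 : 3 ≤ ℓ)
    (hG : CycleFree G ℓ) :
    6 * (G.cliqueFinset 3).card ≤ (ℓ - 3) * (2 * G.edgeFinset.card) := by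
  have h1 : ∀ v : V, D G (G.neighborFinset v) ≤ (ℓ - 3) * (G.neighborFinset v).card := by
    intro v
    have hk : 2 ≤ ℓ - 1 := by omega
    have h2 := EG (G := G) hk (G.neighborFinset v).card (G.neighborFinset v) le_rfl
      (noPath_neighbor hl3 hG v)
    have heq : ℓ - 1 - 2 = ℓ - 3 := by omega
    rwa [heq] at h2
  calc 6 * (G.cliqueFinset 3).card
      = ((Finset.univ : Finset (V × V × V)).filter
        (fun p => G.Adj p.1 p.2.1 ∧ G.Adj p.1 p.2.2 ∧ G.Adj p.2.1 p.2.2)).card :=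
        (card_ordered_triangles (G := G)).symm
    _ = ∑ v : V, D G (G.neighborFinset v) := (sum_D_eq (G := G)).symm
    _ ≤ ∑ v : V, (ℓ - 3) * (G.neighborFinset v).card :=
        Finset.sum_le_sum (fun v _ => h1 v)
    _ = (ℓ - 3) * ∑ v : V, (G.neighborFinset v).card := by rw [Finset.mul_sum]
    _ = (ℓ - 3) * (2 * G.edgeFinset.card) := by
        congr 1
        simp only [SimpleGraph.card_neighborFinset_eq_degree]
        exact G.sum_degrees_eq_twice_card_edges

end EGaux

/-- If `G` contains no cycle of length `ℓ` (`ℓ ≥ 3`), then the number of triangles of `G`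
is at most `(ℓ - 3)/3` times the number of edges of `G`. -/
theorem stmt0 {V : Type*} [Fintype V] (G : SimpleGraph V) (ℓ : ℕ) (hℓ : 3 ≤ ℓ)
    (hG : CycleFree G ℓ) :
    3 * (G.cliqueSet 3).ncard ≤ (ℓ - 3) * G.edgeSet.ncard := by
  classical
  have h6 := EGaux.key G hℓ hG
  have hT : (G.cliqueSet 3).ncard = (G.cliqueFinset 3).card := by
    rw [← SimpleGraph.coe_cliqueFinset, Set.ncard_coe_finset]
  have hE : G.edgeSet.ncard = G.edgeFinset.card := by
    rw [← SimpleGraph.coe_edgeFinset, Set.ncard_coe_finset]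
  rw [hT, hE]
  have h7 : 2 * (3 * (G.cliqueFinset 3).card) ≤ 2 * ((ℓ - 3) * G.edgeFinset.card) := by
    calc 2 * (3 * (G.cliqueFinset 3).card) = 6 * (G.cliqueFinset 3).card := by ring
      _ ≤ (ℓ - 3) * (2 * G.edgeFinset.card) := h6
      _ = 2 * ((ℓ - 3) * G.edgeFinset.card) := by ring
  exact Nat.le_of_mul_le_mul_left h7 (by norm_num)
end

section
/- Let H be a 3-uniform hypergraph containing no Berge cycle of length ℓ (ℓ ≥ 4). Define the graph G₂ on the vertex set of H whose edges are the pairs {u,v} contained in at least two hyperedges of H. Then G₂ contains no cycle of length ℓ. -/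
lemma support_getElem_eq' {V : Type*} {G : SimpleGraph V} {u v : V} (p : G.Walk u v)
    {i : ℕ} (h : i < p.support.length) : p.support[i] = p.getVert i := by
  induction p generalizing i with
  | nil =>
    simp only [SimpleGraph.Walk.support_nil, List.length_singleton] at h
    interval_cases i
    simp [SimpleGraph.Walk.getVert_zero]
  | cons h' p ih =>
    cases i with
    | zero => simp [SimpleGraph.Walk.getVert_zero]
    | succ n =>
      simp only [SimpleGraph.Walk.support_cons, List.getElem_cons_succ,
        SimpleGraph.Walk.getVert_cons_succ]
      exact ih (by simp only [SimpleGraph.Walk.support_cons, List.length_cons] at h; omega)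

lemma cycle_getVert_inj' {V : Type*} {G : SimpleGraph V} {v : V} (c : G.Walk v v)
    (hc : c.IsCycle) {i j : ℕ} (hi : i < c.length) (hj : j < c.length)
    (hij : c.getVert i = c.getVert j) : i = j := by
  have hnd := hc.support_nodup
  have hlsup : c.support.length = c.length + 1 := SimpleGraph.Walk.length_support c
  have hlt : c.support.tail.length = c.length := by simp [List.length_tail, hlsup]
  have h3 := hc.three_le_length
  have key : ∀ m : ℕ, (hm : m < c.length) → (hm0 : m ≠ 0) →
      c.support.tail[m - 1]'(by omega) = c.getVert m := by
    intro m hm hm0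
    have h1 : c.support.tail[m - 1]'(by omega) = c.support[m]'(by omega) := by
      have := List.getElem_tail (l := c.support) (i := m - 1) (by omega)
      rw [this]
      congr 1
      omega
    rw [h1, support_getElem_eq']
  have keyL : c.support.tail[c.length - 1]'(by omega) = c.getVert 0 := by
    have h1 : c.support.tail[c.length - 1]'(by omega) = c.support[c.length]'(by omega) := by
      have := List.getElem_tail (l := c.support) (i := c.length - 1) (by omega)
      rw [this]; congr 1; omega
    rw [h1, support_getElem_eq', SimpleGraph.Walk.getVert_length c, SimpleGraph.Walk.getVert_zero]
  rcases eq_or_ne i 0 with h0 | h0 <;> rcases eq_or_ne j 0 with h1 | h1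
  · omega
  · subst h0
    rw [← keyL, ← key j hj h1] at hij
    have := hnd.getElem_inj_iff.mp hij.symm
    omega
  · subst h1
    rw [← keyL, ← key i hi h0] at hij
    have := hnd.getElem_inj_iff.mp hij
    omega
  · rw [← key i hi h0, ← key j hj h1] at hij
    have := hnd.getElem_inj_iff.mp hij
    omega

/-- The hypergraph `H` contains a Berge cycle of length `ℓ`. -/
def HasBergeCycle {V : Type*} (H : Finset (Finset V)) (ℓ : ℕ) : Prop :=
  ∃ (f : Fin ℓ → Finset V) (v : Fin ℓ → V),
    Function.Injective f ∧ Function.Injective v ∧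
    (∀ i, f i ∈ H) ∧ ∀ i : Fin ℓ, v i ∈ f i ∧ v ⟨(↑i + 1) % ℓ, Nat.mod_lt _ i.pos⟩ ∈ f i

/-- The codegree of the pair `{u, v}` in the hypergraph `H`. -/
def codeg {V : Type*} [DecidableEq V] (H : Finset (Finset V)) (u v : V) : ℕ :=
  (H.filter fun E => ({u, v} : Finset V) ⊆ E).card

/-- The graph on the vertex set of `H` whose edges are the pairs covered at least twice. -/
def shadowGraph {V : Type*} [DecidableEq V] (H : Finset (Finset V)) : SimpleGraph V where
  Adj u v := u ≠ v ∧ 2 ≤ codeg H u v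
  symm := by
    constructor
    rintro u v ⟨h1, h2⟩
    refine ⟨h1.symm, ?_⟩
    rwa [codeg, Finset.pair_comm v u]
  loopless := ⟨fun v h => h.1 rfl⟩

/-- If the 3-uniform hypergraph `H` has no Berge cycle of length `ℓ` (`ℓ ≥ 4`), then the
graph of pairs covered at least twice has no cycle of length `ℓ`. -/
theorem stmt4 {V : Type*} [DecidableEq V] (H : Finset (Finset V)) (ℓ : ℕ)
    (h3 : ∀ E ∈ H, E.card = 3) (hℓ : 4 ≤ ℓ) (hB : ¬ HasBergeCycle H ℓ) :
    CycleFree (shadowGraph H) ℓ := by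
  intro v c hc hlen
  apply hB
  have hpos : 0 < ℓ := by omega
  -- successor function on Fin ℓ
  set s : Fin ℓ → Fin ℓ := fun i => ⟨(↑i + 1) % ℓ, Nat.mod_lt _ hpos⟩ with hs
  have hmod : ∀ a : ℕ, a < ℓ → (a + 1) % ℓ = a + 1 ∨ ((a + 1) % ℓ = 0 ∧ a + 1 = ℓ) := by
    intro a ha
    rcases Nat.lt_or_ge (a + 1) ℓ with h | h
    · exact Or.inl (Nat.mod_eq_of_lt h)
    · have : a + 1 = ℓ := by omega
      exact Or.inr ⟨by simp [this, Nat.mod_self], this⟩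
  have hsval : ∀ i : Fin ℓ, (s i).val = (↑i + 1) % ℓ := fun _ => rfl
  have hsne : ∀ i : Fin ℓ, s i ≠ i := by
    intro i h
    have := congrArg Fin.val h
    rw [hsval] at this
    rcases hmod i.val i.isLt with h' | ⟨h', h''⟩ <;> omega
  have hsinj : Function.Injective s := by
    intro i j h
    have := congrArg Fin.val h
    rw [hsval, hsval] at this
    apply Fin.ext
    rcases hmod i.val i.isLt with h1 | ⟨h1, h1'⟩ <;>
      rcases hmod j.val j.isLt with h2 | ⟨h2, h2'⟩ <;> omega
  have hssne : ∀ i : Fin ℓ, s (s i) ≠ i := by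
    intro i h
    have hv := congrArg Fin.val h
    rw [hsval, hsval] at hv
    have hlt2 : (↑i + 1) % ℓ < ℓ := Nat.mod_lt _ hpos
    rcases hmod i.val i.isLt with h1 | ⟨h1, h1'⟩
    · rw [h1] at hv
      rcases hmod (i.val + 1) (by omega) with h2 | ⟨h2, h2'⟩ <;> omega
    · rw [h1] at hv
      rcases hmod 0 (by omega) with h2 | ⟨h2, h2'⟩ <;> omega
  -- the vertices of the cycle
  set w : Fin ℓ → V := fun i => c.getVert i.val with hw
  have hwinj : Function.Injective w := by
    intro i j h
    exact Fin.ext (cycle_getVert_inj' c hc (hlen ▸ i.isLt) (hlen ▸ j.isLt) h)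
  -- adjacency around the cycle
  have hadj : ∀ i : Fin ℓ, 2 ≤ codeg H (w i) (w (s i)) := by
    intro i
    have hilt : i.val < c.length := hlen ▸ i.isLt
    have hA : (shadowGraph H).Adj (c.getVert i.val) (c.getVert (i.val + 1)) :=
      c.adj_getVert_succ hilt
    have hws : w (s i) = c.getVert (i.val + 1) := by
      rcases hmod i.val i.isLt with h1 | ⟨h1, h1'⟩
      · simp [hw, hsval, h1]
      · have e1 : w (s i) = c.getVert 0 := by simp [hw, hsval, h1]
        rw [e1, SimpleGraph.Walk.getVert_zero, h1', ← hlen,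
          SimpleGraph.Walk.getVert_length]
    rw [hws]
    exact hA.2
  -- choose hyperedges avoiding the triple {w i, w (s i), w (s (s i))}
  have hne : ∀ i : Fin ℓ, ∃ E, E ∈ H ∧ ({w i, w (s i)} : Finset V) ⊆ E ∧
      E ≠ ({w i, w (s i), w (s (s i))} : Finset V) := by
    intro i
    have h2 := hadj i
    rw [codeg] at h2
    have hcard : 1 ≤ ((H.filter fun E => ({w i, w (s i)} : Finset V) ⊆ E) \
        ({({w i, w (s i), w (s (s i))} : Finset V)} : Finset (Finset V))).card := by
      have := Finset.card_le_card_sdiff_add_card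
        (s := H.filter fun E => ({w i, w (s i)} : Finset V) ⊆ E)
        (t := ({({w i, w (s i), w (s (s i))} : Finset V)} : Finset (Finset V)))
      simp only [Finset.card_singleton] at this
      omega
    obtain ⟨E, hE⟩ := Finset.card_pos.mp (by omega : 0 < ((H.filter fun E => ({w i, w (s i)} : Finset V) ⊆ E) \
        ({({w i, w (s i), w (s (s i))} : Finset V)} : Finset (Finset V))).card)
    rw [Finset.mem_sdiff, Finset.mem_filter, Finset.mem_singleton] at hE
    exact ⟨E, hE.1.1, hE.1.2, hE.2⟩
  choose f hfH hfpair hfU using hne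
  refine ⟨f, w, ?_, hwinj, hfH, ?_⟩
  · -- injectivity of f
    intro i j hij
    by_contra hne'
    have hE3 : (f i).card = 3 := h3 _ (hfH i)
    have m1 : w i ∈ f i := hfpair i (by simp)
    have m2 : w (s i) ∈ f i := hfpair i (by simp)
    have m3 : w j ∈ f i := hij ▸ hfpair j (by simp)
    have m4 : w (s j) ∈ f i := hij ▸ hfpair j (by simp)
    by_cases hji : j = s i
    · -- f i ⊇ {w i, w (s i), w (s (s i))} = U i
      have hsub : ({w i, w (s i), w (s (s i))} : Finset V) ⊆ f i := by
        intro x hx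
        simp only [Finset.mem_insert, Finset.mem_singleton] at hx
        rcases hx with h | h | h
        · exact h ▸ m1
        · exact h ▸ m2
        · rw [h, ← hji]; exact m4
      have hcard : ({w i, w (s i), w (s (s i))} : Finset V).card = 3 := by
        rw [Finset.card_insert_of_notMem, Finset.card_insert_of_notMem, Finset.card_singleton]
        · simp only [Finset.mem_singleton]
          exact fun h => hsne (s i) (hwinj h).symm
        · simp only [Finset.mem_insert, Finset.mem_singleton, not_or]
          exact ⟨fun h => hsne i (hwinj h).symm, fun h => hssne i (hwinj h).symm⟩
      exact hfU i (Finset.eq_of_subset_of_card_le hsub (by omega)).symm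
    · by_cases hij' : i = s j
      · have hsub : ({w j, w (s j), w (s (s j))} : Finset V) ⊆ f j := by
          intro x hx
          simp only [Finset.mem_insert, Finset.mem_singleton] at hx
          rcases hx with h | h | h
          · exact h ▸ (hij ▸ m3)
          · exact h ▸ (hij ▸ m4)
          · rw [h, ← hij']
            exact hij ▸ m2
        have hcard : ({w j, w (s j), w (s (s j))} : Finset V).card = 3 := by
          rw [Finset.card_insert_of_notMem, Finset.card_insert_of_notMem,
            Finset.card_singleton]
          · simp only [Finset.mem_singleton]
            exact fun h => hsne (s j) (hwinj h).symm
          · simp only [Finset.mem_insert, Finset.mem_singleton, not_or]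
            exact ⟨fun h => hsne j (hwinj h).symm, fun h => hssne j (hwinj h).symm⟩
        have hE3' : (f j).card = 3 := h3 _ (hfH j)
        exact hfU j (Finset.eq_of_subset_of_card_le hsub (by omega)).symm
      · -- four distinct vertices inside a 3-set: contradiction
        have hd12 : w i ≠ w (s i) := fun h => hsne i (hwinj h).symm
        have hd13 : w i ≠ w j := fun h => hne' (hwinj h)
        have hd14 : w i ≠ w (s j) := fun h => hij' (hwinj h)
        have hd23 : w (s i) ≠ w j := fun h => hji (hwinj h).symm
        have hd24 : w (s i) ≠ w (s j) := fun h => hne' (hsinj (hwinj h))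
        have hd34 : w j ≠ w (s j) := fun h => hsne j (hwinj h).symm
        have hsub : ({w i, w (s i), w j, w (s j)} : Finset V) ⊆ f i := by
          intro x hx
          simp only [Finset.mem_insert, Finset.mem_singleton] at hx
          rcases hx with h | h | h | h
          · exact h ▸ m1
          · exact h ▸ m2
          · exact h ▸ m3
          · exact h ▸ m4
        have hcard : ({w i, w (s i), w j, w (s j)} : Finset V).card = 4 := by
          rw [Finset.card_insert_of_notMem, Finset.card_insert_of_notMem,
            Finset.card_insert_of_notMem, Finset.card_singleton]
          · simpa using hd34
          · simp only [Finset.mem_insert, Finset.mem_singleton, not_or]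
            exact ⟨hd23, hd24⟩
          · simp only [Finset.mem_insert, Finset.mem_singleton, not_or]
            exact ⟨hd12, hd13, hd14⟩
        have := Finset.card_le_card hsub
        omega
  · intro i
    refine ⟨hfpair i (by simp), ?_⟩
    have : (⟨(↑i + 1) % ℓ, Nat.mod_lt _ i.pos⟩ : Fin ℓ) = s i := rfl
    rw [this]
    exact hfpair i (by simp)
end

section
/- Let H be a 3-uniform hypergraph containing no Berge cycle of length 3 (i.e., no three distinct hyperedges H₀,H₁,H₂ and distinct vertices v₀,v₁,v₂ with {v₀,v₁}⊆H₀, {v₁,v₂}⊆H₁, {v₂,v₀}⊆H₂). Then the graph on the vertex set of H whose edges are pairs contained in at least two hyperedges of H is triangle-free. -/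
/-- If the 3-uniform hypergraph `H` has no Berge cycle of length `3`, then the graph of
pairs covered at least twice is triangle-free. -/
theorem stmt5 {V : Type*} [DecidableEq V] (H : Finset (Finset V))
    (h3 : ∀ E ∈ H, E.card = 3) (hB : ¬ HasBergeCycle H 3) :
    (shadowGraph H).CliqueFree 3 := by
  intro t ht
  rw [SimpleGraph.is3Clique_iff] at ht
  obtain ⟨a, b, c, hab, hac, hbc, -⟩ := ht
  obtain ⟨hab', hab2⟩ := hab
  obtain ⟨hac', hac2⟩ := hac
  obtain ⟨hbc', hbc2⟩ := hbc
  -- the three filter sets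
  set S0 := H.filter fun E => ({a, b} : Finset V) ⊆ E with hS0
  set S1 := H.filter fun E => ({b, c} : Finset V) ⊆ E with hS1
  set S2 := H.filter fun E => ({c, a} : Finset V) ⊆ E with hS2
  have hS0c : 2 ≤ S0.card := hab2
  have hS1c : 2 ≤ S1.card := hbc2
  have hS2c : 2 ≤ S2.card := by rwa [codeg, Finset.pair_comm] at hac2
  have habc : ({a, b, c} : Finset V).card = 3 := by
    rw [Finset.card_insert_of_notMem, Finset.card_insert_of_notMem, Finset.card_singleton]
    · simpa using hbc'
    · simp [hab', hac']
  -- pick E0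
  obtain ⟨E0, hE0⟩ : S0.Nonempty := Finset.card_pos.mp (by omega)
  -- pick E1 ≠ E0
  obtain ⟨E1, hE1, hE10⟩ := Finset.exists_mem_ne (s := S1) (by omega) E0
  -- any edge containing {a,b,c} is {a,b,c}
  have key : ∀ E ∈ H, ({a, b, c} : Finset V) ⊆ E → E = {a, b, c} := by
    intro E hE hsub
    exact (Finset.eq_of_subset_of_card_le hsub (by rw [habc, h3 E hE])).symm
  -- pick E2 ∉ {E0, E1}
  have : ∃ E ∈ S2, E ≠ E0 ∧ E ≠ E1 := by
    by_contra hcon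
    push_neg at hcon
    have hsub : S2 ⊆ {E0, E1} := by
      intro E hE
      rcases eq_or_ne E E0 with rfl | h
      · simp
      · simp [hcon E hE h]
    have : S2 = {E0, E1} := Finset.eq_of_subset_of_card_le hsub
      (le_trans (Finset.card_insert_le _ _) (by simpa using hS2c))
    have hE0' : E0 ∈ S2 := this ▸ (by simp)
    have hE1' : E1 ∈ S2 := this ▸ (by simp)
    simp only [hS0, hS1, hS2, Finset.mem_filter] at hE0 hE1 hE0' hE1'
    have e0 : E0 = {a, b, c} := by
      apply key E0 hE0.1
      intro x hx
      simp only [Finset.mem_insert, Finset.mem_singleton] at hx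
      rcases hx with rfl | rfl | rfl
      · exact hE0.2 (by simp)
      · exact hE0.2 (by simp)
      · exact hE0'.2 (by simp)
    have e1 : E1 = {a, b, c} := by
      apply key E1 hE1.1
      intro x hx
      simp only [Finset.mem_insert, Finset.mem_singleton] at hx
      rcases hx with rfl | rfl | rfl
      · exact hE1'.2 (by simp)
      · exact hE1.2 (by simp)
      · exact hE1.2 (by simp)
    exact hE10 (e1.trans e0.symm)
  obtain ⟨E2, hE2, hE20, hE21⟩ := this
  simp only [hS0, hS1, hS2, Finset.mem_filter] at hE0 hE1 hE2
  apply hB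
  refine ⟨![E0, E1, E2], ![a, b, c], ?_, ?_, ?_, ?_⟩
  · intro i j
    fin_cases i <;> fin_cases j <;> simp_all <;> (first | rfl | (intro h; exact absurd h.symm (by assumption)))
  · intro i j
    fin_cases i <;> fin_cases j <;> simp [hab', hac', hbc', hab'.symm, hac'.symm, hbc'.symm]
  · intro i; fin_cases i <;> simp [hE0.1, hE1.1, hE2.1]
  · intro i
    fin_cases i <;> refine ⟨?_, ?_⟩ <;> simp only [Fin.isValue, Matrix.cons_val_zero, Matrix.cons_val_one, Matrix.head_cons]
    · exact hE0.2 (by simp)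
    · show (![a,b,c] : Fin 3 → V) ⟨1 % 3, _⟩ ∈ E0
      exact hE0.2 (by simp)
    · exact hE1.2 (by simp)
    · show (![a,b,c] : Fin 3 → V) ⟨2 % 3, _⟩ ∈ E1
      exact hE1.2 (by simp)
    · exact hE2.2 (by simp)
    · show (![a,b,c] : Fin 3 → V) ⟨3 % 3, _⟩ ∈ E2
      exact hE2.2 (by simp)
end

section
/- Let L be a cycle of length ℓ ≥ 4 in a graph, and let H be a 3-uniform hypergraph such that every edge of L is contained in at least two hyperedges of H. Then for every set S of i edges of L (1 ≤ i ≤ ℓ), the number of hyperedges of H containing at least one edge of S is at least i. -/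
section Helpers

open SimpleGraph Walk

variable {V : Type*} {G : SimpleGraph V}

lemma mem_support_of_mem_edge {u v w : V} {p : G.Walk u v} {e : Sym2 V}
    (he : e ∈ p.edges) (hw : w ∈ e) : w ∈ p.support := by
  induction e with
  | _ a b =>
    rcases Sym2.mem_iff.mp hw with rfl | rfl
    · exact p.fst_mem_support_of_mem_edges he
    · exact p.snd_mem_support_of_mem_edges he

lemma path_len_le_two {u v t : V} (p : G.Walk u v) (hp : p.IsPath)
    (h1 : s(u, t) ∈ p.edges) (h2 : s(t, v) ∈ p.edges) : p.length ≤ 2 := by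
  cases p with
  | nil => simp at h1
  | @cons _ w _ h r =>
    rw [cons_isPath_iff] at hp
    obtain ⟨hr, hur⟩ := hp
    rw [edges_cons, List.mem_cons] at h1 h2
    have ht : t = w := by
      rcases h1 with h1 | h1
      · rcases Sym2.eq_iff.mp h1 with ⟨-, h'⟩ | ⟨h', -⟩
        · exact h'
        · exact absurd h' h.ne
      · exact absurd (mem_support_of_mem_edge h1 (Sym2.mem_mk_left u t)) hur
    subst ht
    rcases h2 with h2 | h2
    · rcases Sym2.eq_iff.mp h2 with ⟨h', -⟩ | ⟨-, hv⟩
      · exact absurd h'.symm h.ne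
      · exact absurd (hv ▸ end_mem_support r) hur
    · cases r with
      | nil => simp at h2
      | @cons _ z _ h' s =>
        rw [cons_isPath_iff] at hr
        obtain ⟨hs, hts⟩ := hr
        rw [edges_cons, List.mem_cons] at h2
        have hz : z = v := by
          rcases h2 with h2 | h2
          · rcases Sym2.eq_iff.mp h2 with ⟨-, h''⟩ | ⟨h'', -⟩
            · exact h''.symm
            · exact absurd h'' h'.ne
          · exact absurd (mem_support_of_mem_edge h2 (Sym2.mem_mk_left t v)) hts
        subst hz
        have : s = Walk.nil := isPath_iff_eq_nil.mp hs
        subst this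
        simp

/-- A cycle of length ≥ 4 cannot contain all three edges of a triangle. -/

lemma path_no_triangle {u v a b c : V} (p : G.Walk u v) (hp : p.IsPath)
    (hab' : a ≠ b) (hbc' : b ≠ c) (hac' : a ≠ c)
    (h1 : s(a, b) ∈ p.edges) (h2 : s(b, c) ∈ p.edges) (h3 : s(a, c) ∈ p.edges) : False := by
  induction p with
  | nil => simp at h1
  | @cons u w v h r ih =>
    rw [cons_isPath_iff] at hp
    obtain ⟨hr, hur⟩ := hp
    rw [edges_cons, List.mem_cons] at h1 h2 h3
    rcases h1 with h1 | h1
    · -- s(a,b) = s(u,w): u ∈ {a,b}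
      have hu : u ∈ s(a, b) := h1 ▸ Sym2.mem_mk_left u w
      rcases Sym2.mem_iff.mp hu with rfl | rfl
      · -- u = a : use s(a,c)
        rcases h3 with h3 | h3
        · have := h1.trans h3.symm
          rw [Sym2.eq_iff] at this; tauto
        · exact hur (mem_support_of_mem_edge h3 (Sym2.mem_mk_left _ _))
      · -- u = b : use s(b,c)
        rcases h2 with h2 | h2
        · have := h1.trans h2.symm
          rw [Sym2.eq_iff] at this; tauto
        · exact hur (mem_support_of_mem_edge h2 (Sym2.mem_mk_left _ _))
    · rcases h2 with h2 | h2
      · have hu : u ∈ s(b, c) := h2 ▸ Sym2.mem_mk_left u w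
        rcases Sym2.mem_iff.mp hu with rfl | rfl
        · exact hur (mem_support_of_mem_edge h1 (Sym2.mem_mk_right _ _))
        · -- u = c : use s(a,c) = s(a,u)
          rcases h3 with h3 | h3
          · have := h3.trans h2.symm
            rw [Sym2.eq_iff] at this
            rcases this with ⟨e, -⟩ | ⟨e1, e2⟩
            · exact hab' e
            · exact hab' (e1.trans e2)
          · exact hur (mem_support_of_mem_edge h3 (Sym2.mem_mk_right _ _))
      · rcases h3 with h3 | h3
        · have hu : u ∈ s(a, c) := h3 ▸ Sym2.mem_mk_left u w
          rcases Sym2.mem_iff.mp hu with rfl | rfl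
          · exact hur (mem_support_of_mem_edge h1 (Sym2.mem_mk_left _ _))
          · exact hur (mem_support_of_mem_edge h2 (Sym2.mem_mk_right _ _))
        · exact ih hr h1 h2 h3

/-- A cycle of length ≥ 4 cannot contain all three edges of a triangle. -/
lemma cycle_no_triangle {x a b c : V} (p : G.Walk x x) (hp : p.IsCycle)
    (hlen : 4 ≤ p.length) (hab' : a ≠ b) (hbc' : b ≠ c) (hac' : a ≠ c)
    (h1 : s(a, b) ∈ p.edges) (h2 : s(b, c) ∈ p.edges) (h3 : s(a, c) ∈ p.edges) :
    False := by
  cases p with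
  | nil => simp at h1
  | @cons _ y _ h q =>
    rw [cons_isCycle_iff] at hp
    obtain ⟨hq, hxy⟩ := hp
    rw [edges_cons, List.mem_cons] at h1 h2 h3
    rw [length_cons] at hlen
    have key : ∀ u v t : V, s(u, v) = s(x, y) → s(v, t) ∈ q.edges → s(t, u) ∈ q.edges →
        False := by
      intro u v t huv e1 e2
      rcases Sym2.eq_iff.mp huv with ⟨hu, hv⟩ | ⟨hu, hv⟩
      · subst hu; subst hv
        have := path_len_le_two q hq e1 (Sym2.eq_swap ▸ e2)
        omega
      · subst hu; subst hv
        have := path_len_le_two q hq (Sym2.eq_swap ▸ e2) (Sym2.eq_swap ▸ e1)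
        omega
    rcases h1 with h1 | h1
    · -- s(a,b) first; need s(b,c), s(a,c) ∈ q.edges
      have e2 : s(b, c) ∈ q.edges := by
        rcases h2 with h2 | h2
        · have := h2.trans h1.symm; rw [Sym2.eq_iff] at this; tauto
        · exact h2
      have e3 : s(a, c) ∈ q.edges := by
        rcases h3 with h3 | h3
        · have := h3.trans h1.symm; rw [Sym2.eq_iff] at this; tauto
        · exact h3
      exact key a b c h1 e2 (Sym2.eq_swap ▸ e3)
    · rcases h2 with h2 | h2
      · have e3 : s(a, c) ∈ q.edges := by
          rcases h3 with h3 | h3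
          · have := h3.trans h2.symm; rw [Sym2.eq_iff] at this; tauto
          · exact h3
        exact key b c a h2 (Sym2.eq_swap ▸ e3) (Sym2.eq_swap ▸ h1)
      · rcases h3 with h3 | h3
        · exact key c a b (Sym2.eq_swap ▸ h3) h1 h2
        · exact path_no_triangle q hq hab' hbc' hac' h1 h2 h3

lemma filter_card_le_two [DecidableEq V] {x : V} (c : G.Walk x x) (hc : c.IsCycle)
    (hlen : 4 ≤ c.length) (E : Finset V) (hE : E.card = 3) :
    (c.edges.toFinset.filter (fun e => e ∈ E.sym2)).card ≤ 2 := by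
  by_contra hcon
  push_neg at hcon
  obtain ⟨a, b, d, hab, had, hbd, rfl⟩ := Finset.card_eq_three.mp hE
  set F := (c.edges.toFinset.filter (fun e => e ∈ ({a, b, d} : Finset V).sym2)) with hF
  set tri : Finset (Sym2 V) := {s(a, b), s(b, d), s(a, d)} with htri
  have hsub : F ⊆ tri := by
    intro e he
    rw [hF, Finset.mem_filter, List.mem_toFinset] at he
    obtain ⟨hec, heE⟩ := he
    have hne : ¬ e.IsDiag := G.not_isDiag_of_mem_edgeSet (c.edges_subset_edgeSet hec)
    induction e with
    | _ p q =>
      rw [Finset.mem_sym2_iff] at heE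
      have hp := heE p (Sym2.mem_mk_left p q)
      have hq := heE q (Sym2.mem_mk_right p q)
      have hpq : p ≠ q := by simpa [Sym2.isDiag_iff_proj_eq] using hne
      simp only [Finset.mem_insert, Finset.mem_singleton] at hp hq
      rw [htri]
      simp only [Finset.mem_insert, Finset.mem_singleton, Sym2.eq_iff]
      rcases hp with rfl | rfl | rfl <;> rcases hq with rfl | rfl | rfl <;> tauto
  have htri3 : tri.card ≤ 3 := by
    apply (Finset.card_insert_le _ _).trans
    apply Nat.succ_le_succ
    apply (Finset.card_insert_le _ _).trans
    simp
  have heq : F = tri := Finset.eq_of_subset_of_card_le hsub (htri3.trans hcon)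
  have hmem : ∀ e ∈ tri, e ∈ c.edges := by
    intro e he
    rw [← heq, hF, Finset.mem_filter, List.mem_toFinset] at he
    exact he.1
  exact cycle_no_triangle c hc hlen hab hbd had
    (hmem _ (by simp [htri])) (hmem _ (by simp [htri])) (hmem _ (by simp [htri]))

end Helpers

/-- Hall condition: if every edge of a cycle `c` of length `ℓ ≥ 4` lies in at least two
hyperedges of the 3-uniform hypergraph `H`, then every set `S` of `i ≥ 1` edges of the
cycle meets at least `i` hyperedges. -/
theorem stmt6 {V : Type*} [DecidableEq V] (G : SimpleGraph V) (ℓ : ℕ) (hℓ : 4 ≤ ℓ)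
    (x : V) (c : G.Walk x x) (hc : c.IsCycle) (hlen : c.length = ℓ)
    (H : Finset (Finset V)) (h3 : ∀ E ∈ H, E.card = 3)
    (hcov : ∀ e ∈ c.edges, 2 ≤ (H.filter fun E => e ∈ E.sym2).card) :
    ∀ S ⊆ c.edges.toFinset, 1 ≤ S.card →
      S.card ≤ (H.filter fun E => ∃ e ∈ S, e ∈ E.sym2).card := by
  intro S hS _
  have hll : 4 ≤ c.length := hlen ▸ hℓ
  set T := H.filter (fun E => ∃ e ∈ S, e ∈ E.sym2) with hT
  have step1 : 2 * S.card ≤ ∑ e ∈ S, (H.filter fun E => e ∈ E.sym2).card := by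
    rw [mul_comm]
    simpa using Finset.card_nsmul_le_sum S _ 2
      (fun e he => hcov e (List.mem_toFinset.mp (hS he)))
  have swap : ∑ e ∈ S, (H.filter fun E => e ∈ E.sym2).card
      = ∑ E ∈ H, (S.filter fun e => e ∈ E.sym2).card := by
    simp_rw [Finset.card_filter]
    exact Finset.sum_comm
  have step2 : ∑ E ∈ H, (S.filter fun e => e ∈ E.sym2).card ≤ 2 * T.card := by
    rw [← Finset.sum_filter_add_sum_filter_not H (fun E => ∃ e ∈ S, e ∈ E.sym2)]
    have h0 : ∑ E ∈ H.filter (fun E => ¬ ∃ e ∈ S, e ∈ E.sym2),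
        (S.filter fun e => e ∈ E.sym2).card = 0 := by
      apply Finset.sum_eq_zero
      intro E hE
      rw [Finset.mem_filter] at hE
      rw [Finset.card_eq_zero, Finset.filter_eq_empty_iff]
      exact fun {e} he hmem => hE.2 ⟨e, he, hmem⟩
    rw [h0, add_zero]
    calc ∑ E ∈ T, (S.filter fun e => e ∈ E.sym2).card
        ≤ ∑ _E ∈ T, 2 := by
          apply Finset.sum_le_sum
          intro E hE
          have hEH : E ∈ H := Finset.mem_of_mem_filter E hE
          calc (S.filter fun e => e ∈ E.sym2).card
              ≤ (c.edges.toFinset.filter fun e => e ∈ E.sym2).card :=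
                Finset.card_le_card (Finset.filter_subset_filter _ hS)
            _ ≤ 2 := filter_card_le_two c hc hll E (h3 E hEH)
      _ = 2 * T.card := by rw [Finset.sum_const, smul_eq_mul, mul_comm]
  have := step1.trans (swap ▸ step2)
  omega
end

section
/- Let F be a theta graph (a cycle with a chord) of order ℓ, and let t be an odd integer with 1 ≤ t < ℓ. Suppose A ∪ B is a partition of the vertices of F with A nonempty such that every path of length t in F starting in A ends in A. Then A = V(F). -/
namespace ThetaAux
open SimpleGraph

/-- ascending list of integers n, n+1, ..., n+k -/
def rg (n : ℤ) (k : ℕ) : List ℤ := (List.range (k+1)).map (fun i : ℕ => n + (i:ℤ))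

lemma mem_rg {n x : ℤ} {k : ℕ} (h : x ∈ rg n k) : n ≤ x ∧ x ≤ n + k := by
  simp only [rg, List.mem_map, List.mem_range] at h
  obtain ⟨i, hi, rfl⟩ := h
  omega

lemma rg_nodup (n : ℤ) (k : ℕ) : (rg n k).Nodup := by
  refine List.Nodup.map_on ?_ List.nodup_range
  intro i _ j _ h
  omega

lemma rg_succ (n : ℤ) (k : ℕ) : rg n (k+1) = n :: rg (n+1) k := by
  simp only [rg]
  rw [List.range_succ_eq_map, List.map_cons, List.map_map]
  refine congrArg₂ List.cons (by push_cast; ring) ?_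
  apply List.map_congr_left
  intro i _
  simp only [Function.comp_apply, Nat.succ_eq_add_one]
  push_cast
  ring

lemma eq_of_close {ℓ : ℕ} {x y : ℤ} (hd : (ℓ:ℤ) ∣ y - x) (h : |y - x| < (ℓ:ℤ)) : x = y := by
  have h0 := Int.eq_zero_of_abs_lt_dvd hd h
  omega

section Walks
variable {V : Type*} {F : SimpleGraph V} {f : ℤ → V}

/-- walk along `f` from `f n` of length `k` -/
def fwalk (hadj : ∀ n : ℤ, F.Adj (f n) (f (n+1))) : (n : ℤ) → (k : ℕ) → F.Walk (f n) (f (n + k))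
  | n, 0 => (Walk.nil : F.Walk (f n) (f n)).copy rfl (congrArg f (by push_cast; ring))
  | n, (k+1) => (Walk.cons (hadj n) (fwalk hadj (n+1) k)).copy rfl (congrArg f (by push_cast; ring))

lemma fwalk_length (hadj : ∀ n : ℤ, F.Adj (f n) (f (n+1))) :
    ∀ (k : ℕ) (n : ℤ), (fwalk hadj n k).length = k := by
  intro k
  induction k with
  | zero => intro n; simp [fwalk]
  | succ k ih => intro n; simp [fwalk, ih]

lemma fwalk_support (hadj : ∀ n : ℤ, F.Adj (f n) (f (n+1))) :
    ∀ (k : ℕ) (n : ℤ), (fwalk hadj n k).support = (rg n k).map f := by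
  intro k
  induction k with
  | zero =>
      intro n
      show _ = _
      have : List.range 1 = [0] := rfl
      simp [fwalk, rg, this]
  | succ k ih =>
      intro n
      rw [rg_succ]
      simp only [fwalk, Walk.support_copy, Walk.support_cons, ih, List.map_cons]

end Walks

section CycleFacts
variable {V : Type*} {G : SimpleGraph V}

lemma support_eq_map_getVert : ∀ {u v : V} (p : G.Walk u v),
    p.support = (List.range (p.length + 1)).map p.getVert := by
  intro u v p
  induction p with
  | nil => simp [SimpleGraph.Walk.getVert]
  | @cons a b c h q ih =>
      rw [Walk.support_cons, ih]
      conv_rhs => rw [Walk.length_cons, List.range_succ_eq_map, List.map_cons, List.map_map]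
      refine congrArg₂ List.cons (Walk.getVert_zero _).symm ?_
      apply List.map_congr_left
      intro i _
      rfl

lemma edge_getVert_mem : ∀ {u v : V} (p : G.Walk u v) (i : ℕ), i < p.length →
    s(p.getVert i, p.getVert (i+1)) ∈ p.edges := by
  intro u v p
  induction p with
  | nil => intro i h; simp at h
  | @cons a b c h q ih =>
      intro i hi
      rw [Walk.edges_cons]
      rcases i with _ | j
      · rw [Walk.getVert_zero, Walk.getVert_cons_succ, Walk.getVert_zero]
        exact List.mem_cons_self
      · rw [Walk.length_cons] at hi
        refine List.mem_cons_of_mem _ ?_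
        simpa [Walk.getVert_cons_succ] using ih j (by omega)

lemma cycle_getVert_inj {x : V} {c : G.Walk x x} (hc : c.IsCycle)
    {i j : ℕ} (hi : i < c.length) (hj : j < c.length)
    (h : c.getVert i = c.getVert j) : i = j := by
  have hnd := hc.support_nodup
  have hsupp := support_eq_map_getVert c
  set L := c.length with hL
  have htail : c.support.tail = (List.range L).map (c.getVert ∘ Nat.succ) := by
    rw [hsupp, List.range_succ_eq_map, List.map_cons, List.tail_cons, List.map_map]
  rw [htail] at hnd
  have hinj := List.inj_on_of_nodup_map hnd
  have key : ∀ i' j', i' < L → j' < L →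
      c.getVert (i'+1) = c.getVert (j'+1) → i' = j' := by
    intro i' j' h1 h2 he
    exact hinj (List.mem_range.mpr h1) (List.mem_range.mpr h2) he
  have hL3 : 3 ≤ L := hc.three_le_length
  have hgl : c.getVert L = x := by
    have := Walk.getVert_length c
    rwa [← hL] at this
  rcases Nat.eq_zero_or_pos i with rfl | hi0
  · rcases Nat.eq_zero_or_pos j with rfl | hj0
    · rfl
    · exfalso
      rw [Walk.getVert_zero] at h
      have : (j-1) = (L-1) := key (j-1) (L-1) (by omega) (by omega)
        (by rw [show j - 1 + 1 = j by omega, show L - 1 + 1 = L by omega, hgl, ← h])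
      omega
  · rcases Nat.eq_zero_or_pos j with rfl | hj0
    · exfalso
      rw [Walk.getVert_zero] at h
      have : (i-1) = (L-1) := key (i-1) (L-1) (by omega) (by omega)
        (by rw [show i - 1 + 1 = i by omega, show L - 1 + 1 = L by omega, hgl, h])
      omega
    · have := key (i-1) (j-1) (by omega) (by omega)
        (by rw [show i - 1 + 1 = i by omega, show j - 1 + 1 = j by omega, h])
      omega

end CycleFacts

section Core
open SimpleGraph
variable {V : Type*} {F : SimpleGraph V}

theorem core (f : ℤ → V) (ℓ t d : ℕ) (A : Set V)
    (hper : ∀ m n : ℤ, m ≡ n [ZMOD (ℓ:ℤ)] → f m = f n)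
    (hinj : ∀ m n : ℤ, f m = f n → m ≡ n [ZMOD (ℓ:ℤ)])
    (hadj : ∀ n : ℤ, F.Adj (f n) (f (n+1)))
    (hchord : F.Adj (f 0) (f (d:ℤ)))
    (hd2 : 2 ≤ d) (hdl : 2*d ≤ ℓ)
    (ht1 : 1 ≤ t) (ht2 : t < ℓ) (hodd : Odd t)
    (hsurj : ∀ v : V, ∃ n : ℤ, f n = v)
    (hA : A.Nonempty)
    (hpath : ∀ (u v : V) (p : F.Walk u v), p.IsPath → p.length = t → u ∈ A → v ∈ A) :
    A = Set.univ := by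
  have hl0 : 0 < ℓ := by omega
  -- basic path-to-relation tool
  have rel_of_path : ∀ (p q : ℤ) (w : F.Walk (f p) (f q)), w.IsPath → w.length = t →
      (f p ∈ A ↔ f q ∈ A) := by
    intro p q w hw hlen
    exact ⟨hpath _ _ w hw hlen, hpath _ _ w.reverse hw.reverse (by simpa using hlen)⟩
  have pathOf : ∀ (L : List ℤ) (p q : ℤ) (w : F.Walk (f p) (f q)),
      w.support = L.map f → L.Nodup → (∀ x ∈ L, ∀ y ∈ L, |y - x| < (ℓ:ℤ)) → w.IsPath := by
    intro L p q w hs hnd hcl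
    rw [Walk.isPath_def, hs]
    refine List.Nodup.map_on ?_ hnd
    intro x hx y hy hf
    exact eq_of_close ((hinj x y hf).dvd) (hcl x hx y hy)
  -- family c : [-s .. 0] ++ chord ++ [d .. d+u]
  have hRc : ∀ s u : ℕ, s + u + 1 = t → d + t ≤ ℓ →
      (f (-(s:ℤ)) ∈ A ↔ f ((d:ℤ) + u) ∈ A) := by
    intro s u hsu hdt
    have e1 : f (-(s:ℤ) + (s:ℕ)) = f 0 := congrArg f (by push_cast; ring)
    refine rel_of_path _ _ (((fwalk hadj (-(s:ℤ)) s).copy rfl e1).append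
      (Walk.cons hchord (fwalk hadj (d:ℤ) u))) ?_ ?_
    · refine pathOf (rg (-(s:ℤ)) s ++ rg (d:ℤ) u) _ _ _ ?_ ?_ ?_
      · rw [List.map_append, Walk.support_append, Walk.support_copy, fwalk_support,
          Walk.support_cons, List.tail_cons, fwalk_support]
      · rw [List.nodup_append]
        refine ⟨rg_nodup _ _, rg_nodup _ _, ?_⟩
        intro z hz y hz2
        have b1 := mem_rg hz
        have b2 := mem_rg hz2
        omega
      · intro z hz y hy
        rcases List.mem_append.mp hz with h1 | h1 <;> rcases List.mem_append.mp hy with h2 | h2 <;>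
          [skip; skip; skip; skip] <;>
          first
          | (have b1 := mem_rg h1; have b2 := mem_rg h2; rw [abs_lt]; omega)
    · simp only [Walk.length_append, Walk.length_copy, Walk.length_cons, fwalk_length]
      omega
  -- family a : [-s .. 0] ++ chord ++ [d, d-1, .., d-u]
  have hRa : ∀ s u : ℕ, s + u + 1 = t → u + 1 ≤ d → d + s + 1 ≤ ℓ →
      (f (-(s:ℤ)) ∈ A ↔ f ((d:ℤ) - u) ∈ A) := by
    intro s u hsu hu hds
    have e1 : f (-(s:ℤ) + (s:ℕ)) = f 0 := congrArg f (by push_cast; ring)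
    have e2 : f ((d:ℤ) - u + u) = f (d:ℤ) := congrArg f (by ring)
    refine rel_of_path _ _ (((fwalk hadj (-(s:ℤ)) s).copy rfl e1).append
      (Walk.cons hchord (((fwalk hadj ((d:ℤ) - u) u).reverse).copy e2 rfl))) ?_ ?_
    · refine pathOf (rg (-(s:ℤ)) s ++ (rg ((d:ℤ) - u) u).reverse) _ _ _ ?_ ?_ ?_
      · rw [List.map_append, Walk.support_append, Walk.support_copy, fwalk_support,
          Walk.support_cons, List.tail_cons, Walk.support_copy, Walk.support_reverse,
          fwalk_support, List.map_reverse]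
      · rw [List.nodup_append]
        refine ⟨rg_nodup _ _, List.nodup_reverse.mpr (rg_nodup _ _), ?_⟩
        intro z hz y hz2
        have b1 := mem_rg hz
        have b2 := mem_rg (List.mem_reverse.mp hz2)
        omega
      · intro z hz y hy
        rcases List.mem_append.mp hz with h1 | h1 <;> rcases List.mem_append.mp hy with h2 | h2
        · have b1 := mem_rg h1; have b2 := mem_rg h2; rw [abs_lt]; omega
        · have b1 := mem_rg h1; have b2 := mem_rg (List.mem_reverse.mp h2); rw [abs_lt]; omega
        · have b1 := mem_rg (List.mem_reverse.mp h1); have b2 := mem_rg h2; rw [abs_lt]; omega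
        · have b1 := mem_rg (List.mem_reverse.mp h1); have b2 := mem_rg (List.mem_reverse.mp h2)
          rw [abs_lt]; omega
    · simp only [Walk.length_append, Walk.length_copy, Walk.length_cons, Walk.length_reverse,
        fwalk_length]
      omega
  -- family b : [s, s-1, .., 0] ++ chord ++ [d .. d+u]
  have hRb : ∀ s u : ℕ, s + u + 1 = t → s + 1 ≤ d → d + u + 1 ≤ ℓ →
      (f ((s:ℕ):ℤ) ∈ A ↔ f ((d:ℤ) + u) ∈ A) := by
    intro s u hsu hs hdu
    have e3 : f ((0:ℤ) + (s:ℕ)) = f ((s:ℕ):ℤ) := congrArg f (by ring)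
    refine rel_of_path _ _ ((((fwalk hadj 0 s).reverse).copy e3 rfl).append
      (Walk.cons hchord (fwalk hadj (d:ℤ) u))) ?_ ?_
    · refine pathOf ((rg 0 s).reverse ++ rg (d:ℤ) u) _ _ _ ?_ ?_ ?_
      · rw [List.map_append, Walk.support_append, Walk.support_copy, Walk.support_reverse,
          fwalk_support, Walk.support_cons, List.tail_cons, fwalk_support, List.map_reverse]
      · rw [List.nodup_append]
        refine ⟨List.nodup_reverse.mpr (rg_nodup _ _), rg_nodup _ _, ?_⟩
        intro z hz y hz2
        have b1 := mem_rg (List.mem_reverse.mp hz)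
        have b2 := mem_rg hz2
        omega
      · intro z hz y hy
        rcases List.mem_append.mp hz with h1 | h1 <;> rcases List.mem_append.mp hy with h2 | h2
        · have b1 := mem_rg (List.mem_reverse.mp h1); have b2 := mem_rg (List.mem_reverse.mp h2)
          rw [abs_lt]; omega
        · have b1 := mem_rg (List.mem_reverse.mp h1); have b2 := mem_rg h2; rw [abs_lt]; omega
        · have b1 := mem_rg h1; have b2 := mem_rg (List.mem_reverse.mp h2); rw [abs_lt]; omega
        · have b1 := mem_rg h1; have b2 := mem_rg h2; rw [abs_lt]; omega
    · simp only [Walk.length_append, Walk.length_copy, Walk.length_cons, Walk.length_reverse,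
        fwalk_length]
      omega
  -- family d : [s, .., 0] ++ chord ++ [d, .., d-u]
  have hRd : ∀ s u : ℕ, s + u + 1 = t → t ≤ d →
      (f ((s:ℕ):ℤ) ∈ A ↔ f ((d:ℤ) - u) ∈ A) := by
    intro s u hsu htd
    have e3 : f ((0:ℤ) + (s:ℕ)) = f ((s:ℕ):ℤ) := congrArg f (by ring)
    have e2 : f ((d:ℤ) - u + u) = f (d:ℤ) := congrArg f (by ring)
    refine rel_of_path _ _ ((((fwalk hadj 0 s).reverse).copy e3 rfl).append
      (Walk.cons hchord (((fwalk hadj ((d:ℤ) - u) u).reverse).copy e2 rfl))) ?_ ?_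
    · refine pathOf ((rg 0 s).reverse ++ (rg ((d:ℤ) - u) u).reverse) _ _ _ ?_ ?_ ?_
      · rw [List.map_append, Walk.support_append, Walk.support_copy, Walk.support_reverse,
          fwalk_support, Walk.support_cons, List.tail_cons, Walk.support_copy,
          Walk.support_reverse, fwalk_support, List.map_reverse, List.map_reverse]
      · rw [List.nodup_append]
        refine ⟨List.nodup_reverse.mpr (rg_nodup _ _), List.nodup_reverse.mpr (rg_nodup _ _), ?_⟩
        intro z hz y hz2
        have b1 := mem_rg (List.mem_reverse.mp hz)
        have b2 := mem_rg (List.mem_reverse.mp hz2)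
        omega
      · intro z hz y hy
        rcases List.mem_append.mp hz with h1 | h1 <;> rcases List.mem_append.mp hy with h2 | h2
        · have b1 := mem_rg (List.mem_reverse.mp h1); have b2 := mem_rg (List.mem_reverse.mp h2)
          rw [abs_lt]; omega
        · have b1 := mem_rg (List.mem_reverse.mp h1); have b2 := mem_rg (List.mem_reverse.mp h2)
          rw [abs_lt]; omega
        · have b1 := mem_rg (List.mem_reverse.mp h1); have b2 := mem_rg (List.mem_reverse.mp h2)
          rw [abs_lt]; omega
        · have b1 := mem_rg (List.mem_reverse.mp h1); have b2 := mem_rg (List.mem_reverse.mp h2)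
          rw [abs_lt]; omega
    · simp only [Walk.length_append, Walk.length_copy, Walk.length_cons, Walk.length_reverse,
        fwalk_length]
      omega
  -- the subgroup of valid shifts
  let S : AddSubgroup ℤ := {
    carrier := {D : ℤ | ∀ x : ℤ, f x ∈ A ↔ f (x + D) ∈ A}
    zero_mem' := by intro x; simp
    add_mem' := by
      intro D E hD hE x
      rw [hD x, hE (x + D), add_assoc]
    neg_mem' := by
      intro D hD x
      have h := hD (x + -D)
      rw [show x + -D + D = x by ring] at h
      exact h.symm }
  have hmemS : ∀ D : ℤ, (∀ x : ℤ, f x ∈ A ↔ f (x + D) ∈ A) → D ∈ S := fun D h => h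
  have hSmem : ∀ D : ℤ, D ∈ S → (∀ x : ℤ, f x ∈ A ↔ f (x + D) ∈ A) := fun D h => h
  -- t ∈ S
  have hmemt : (t:ℤ) ∈ S := by
    refine hmemS _ (fun x => ?_)
    refine rel_of_path _ _ (fwalk hadj x t) ?_ (fwalk_length hadj t x)
    refine pathOf (rg x t) _ _ _ (fwalk_support hadj t x) (rg_nodup _ _) ?_
    intro z hz y hy
    have b1 := mem_rg hz
    have b2 := mem_rg hy
    rw [abs_lt]; omega
  -- ℓ ∈ S
  have hmemL : ((ℓ:ℕ):ℤ) ∈ S := by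
    refine hmemS _ (fun x => ?_)
    have e : f (x + (ℓ:ℤ)) = f x := hper _ _ (by rw [Int.modEq_iff_dvd]; exact ⟨-1, by ring⟩)
    rw [e]
  -- mod-N transfer
  have modS : ∀ (N : ℕ), (N:ℤ) ∈ S → ∀ x y : ℤ, ((N:ℤ) ∣ y - x) → (f x ∈ A ↔ f y ∈ A) := by
    intro N hN x y hdvd
    obtain ⟨k, hk⟩ := hdvd
    have h3 := hSmem _ (S.zsmul_mem hN k) x
    have h4 : x + k • ((N:ℕ):ℤ) = y := by
      rw [zsmul_eq_mul]; push_cast; linear_combination -hk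
    rw [h4] at h3
    exact h3
  -- gcd facts
  set g : ℕ := Nat.gcd t ℓ with hgdef
  have hgt : g ∣ t := Nat.gcd_dvd_left _ _
  have hgl : g ∣ ℓ := Nat.gcd_dvd_right _ _
  have hg0 : 0 < g := Nat.gcd_pos_of_pos_left _ ht1
  have hgle_t : g ≤ t := Nat.le_of_dvd ht1 hgt
  have hgle_lt : g ≤ ℓ - t := Nat.le_of_dvd (by omega) (Nat.dvd_sub hgl hgt)
  have hmemg : ((g:ℕ):ℤ) ∈ S := by
    have hb := Int.gcd_eq_gcd_ab (t:ℤ) (ℓ:ℤ)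
    rw [Int.gcd_natCast_natCast] at hb
    rw [← hgdef] at hb
    rw [hb, mul_comm (t:ℤ) _, mul_comm (ℓ:ℤ) _]
    refine S.add_mem ?_ ?_
    · simpa [zsmul_eq_mul] using S.zsmul_mem hmemt (Int.gcdA t ℓ)
    · simpa [zsmul_eq_mul] using S.zsmul_mem hmemL (Int.gcdB t ℓ)
  -- choosing residues in windows
  have emodFacts : ∀ (N : ℕ), 0 < N → ∀ z : ℤ, ∃ w : ℕ, w < N ∧ (N:ℤ) ∣ z - w := by
    intro N hN z
    have hN0 : (0:ℤ) < (N:ℤ) := by exact_mod_cast hN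
    have h0 : (0:ℤ) ≤ z % (N:ℤ) := Int.emod_nonneg z (by omega)
    have h1 : z % (N:ℤ) < (N:ℤ) := Int.emod_lt_of_pos z hN0
    have h2 : ((z % (N:ℤ)).toNat : ℤ) = z % (N:ℤ) := Int.toNat_of_nonneg h0
    exact ⟨(z % (N:ℤ)).toNat, by omega, ⟨z / N, by rw [h2, Int.emod_def]; ring⟩⟩
  -- scenario shift via family c
  have hSc : d + t ≤ ℓ → ((d:ℤ) + t - 1) ∈ S := by
    intro hdt
    refine hmemS _ (fun x => ?_)
    obtain ⟨w, hwlt, hdvd⟩ := emodFacts g hg0 (-x)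
    obtain ⟨q, hq⟩ := hdvd
    have hwt : w + (t - 1 - w) + 1 = t := by omega
    have h1 : f x ∈ A ↔ f (-(w:ℤ)) ∈ A :=
      modS g hmemg x (-(w:ℤ)) ⟨q, by linear_combination hq⟩
    have h2 := hRc w (t - 1 - w) hwt hdt
    have h3 : f ((d:ℤ) + ((t - 1 - w : ℕ):ℤ)) ∈ A ↔ f (x + ((d:ℤ) + t - 1)) ∈ A := by
      refine modS g hmemg _ _ ⟨-q, ?_⟩
      have hc : ((t - 1 - w : ℕ) : ℤ) = (t:ℤ) - 1 - (w:ℤ) := by omega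
      rw [hc]; linear_combination -hq
    exact h1.trans (h2.trans h3)
  -- scenario shift via family d
  have hSd : t ≤ d → ((d:ℤ) - t + 1) ∈ S := by
    intro htd
    refine hmemS _ (fun x => ?_)
    obtain ⟨w, hwlt, hdvd⟩ := emodFacts g hg0 x
    obtain ⟨q, hq⟩ := hdvd
    have hwt : w + (t - 1 - w) + 1 = t := by omega
    have h1 : f x ∈ A ↔ f ((w:ℕ):ℤ) ∈ A :=
      modS g hmemg x ((w:ℕ):ℤ) ⟨-q, by linear_combination -hq⟩
    have h2 := hRd w (t - 1 - w) hwt htd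
    have h3 : f ((d:ℤ) - ((t - 1 - w : ℕ):ℤ)) ∈ A ↔ f (x + ((d:ℤ) - t + 1)) ∈ A := by
      refine modS g hmemg _ _ ⟨q, ?_⟩
      have hc : ((t - 1 - w : ℕ) : ℤ) = (t:ℤ) - 1 - (w:ℤ) := by omega
      rw [hc]; linear_combination hq
    exact h1.trans (h2.trans h3)
  -- reflections (case d < t, ℓ < d + t)
  have hrefl1 : d < t → ℓ < d + t → ∀ x : ℤ,
      (f x ∈ A ↔ f (((d:ℤ) - t + 1) - x) ∈ A) := by
    intro hdt hlt x
    obtain ⟨w, hwlt, hdvd⟩ := emodFacts g hg0 ((d:ℤ) - t - x)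
    obtain ⟨q, hq⟩ := hdvd
    have hwd : w ≤ d - 2 := by omega
    have hcs : ((t - d + w : ℕ):ℤ) = (t:ℤ) - d + w := by omega
    have hcu : ((d - 1 - w : ℕ):ℤ) = (d:ℤ) - 1 - w := by omega
    have h1 : f x ∈ A ↔ f (-((t - d + w : ℕ):ℤ)) ∈ A := by
      refine modS g hmemg _ _ ⟨q, ?_⟩
      rw [hcs]; linear_combination hq
    have h2 := hRa (t - d + w) (d - 1 - w) (by omega) (by omega) (by omega)
    have h3 : f ((d:ℤ) - ((d - 1 - w : ℕ):ℤ)) ∈ A ↔ f (((d:ℤ) - t + 1) - x) ∈ A := by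
      refine modS g hmemg _ _ ⟨q, ?_⟩
      rw [hcu]; linear_combination hq
    exact h1.trans (h2.trans h3)
  have hrefl2 : d < t → ℓ < d + t → ∀ x : ℤ,
      (f x ∈ A ↔ f (((d:ℤ) + t - 1) - x) ∈ A) := by
    intro hdt hlt x
    obtain ⟨w, hwlt, hdvd⟩ := emodFacts g hg0 (x - ((d + t - ℓ : ℕ):ℤ))
    obtain ⟨q, hq⟩ := hdvd
    have hwd : w ≤ ℓ - t - 1 := by omega
    have hbase : ((d + t - ℓ : ℕ):ℤ) = (d:ℤ) + t - ℓ := by omega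
    have hcs : ((d + t - ℓ + w : ℕ):ℤ) = (d:ℤ) + t - ℓ + w := by omega
    have hcu : ((t - 1 - (d + t - ℓ + w) : ℕ):ℤ) = (ℓ:ℤ) - d - 1 - w := by omega
    have h1 : f x ∈ A ↔ f ((d + t - ℓ + w : ℕ):ℤ) ∈ A := by
      refine modS g hmemg _ _ ⟨-q, ?_⟩
      rw [hcs]; rw [hbase] at hq; linear_combination -hq
    have h2 := hRb (d + t - ℓ + w) (t - 1 - (d + t - ℓ + w)) (by omega) (by omega) (by omega)
    have h3 : f ((d:ℤ) + ((t - 1 - (d + t - ℓ + w) : ℕ):ℤ)) ∈ A ↔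
        f (((d:ℤ) + t - 1) - x) ∈ A := by
      refine modS g hmemg _ _ ⟨-q, ?_⟩
      rw [hcu]; rw [hbase] at hq; linear_combination -hq
    exact h1.trans (h2.trans h3)
  -- scenario S3 : d < t, d + t ≤ ℓ
  have hS3 : d < t → d + t ≤ ℓ → (2:ℤ) ∈ S := by
    intro hdt hdtl
    have hdm1 : ((d:ℤ) - 1) ∈ S := by
      have h := S.sub_mem (hSc hdtl) hmemt
      rwa [show ((d:ℤ) + t - 1) - t = (d:ℤ) - 1 by ring] at h
    have hg2pos : 0 < Nat.gcd g (d - 1) := Nat.gcd_pos_of_pos_right _ (by omega)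
    set g2 : ℕ := Nat.gcd g (d - 1) with hg2def
    have hg2led : g2 ≤ d - 1 := Nat.le_of_dvd (by omega) (Nat.gcd_dvd_right _ _)
    have hmemg2 : ((g2:ℕ):ℤ) ∈ S := by
      have hb := Int.gcd_eq_gcd_ab (g:ℤ) (((d-1:ℕ)):ℤ)
      rw [Int.gcd_natCast_natCast] at hb
      have hcast : (((d-1:ℕ)):ℤ) = (d:ℤ) - 1 := by omega
      rw [← hg2def, hcast] at hb
      rw [hb, mul_comm ((g:ℕ):ℤ) _, mul_comm ((d:ℤ) - 1) _]
      exact S.add_mem (by simpa [zsmul_eq_mul] using S.zsmul_mem hmemg (Int.gcdA g (d-1)))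
        (by simpa [zsmul_eq_mul] using S.zsmul_mem hdm1 (Int.gcdB g (d-1)))
    refine hmemS _ (fun x => ?_)
    obtain ⟨w, hwlt, hdvd⟩ := emodFacts g2 hg2pos x
    obtain ⟨q, hq⟩ := hdvd
    have hwd : w ≤ d - 2 := by omega
    have hra := hRa (t - (d - 1 - w)) ((d - 1 - w) - 1) (by omega) (by omega) (by omega)
    have hmt := hSmem _ (S.neg_mem hmemt) (((d - 1 - w : ℕ):ℤ))
    have he1 : (((d - 1 - w : ℕ):ℤ) + -(t:ℤ)) = -((t - (d - 1 - w) : ℕ):ℤ) := by omega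
    have he2 : ((d:ℤ) - (((d - 1 - w) - 1 : ℕ):ℤ)) = (w:ℤ) + 2 := by omega
    have rel1 : f ((d - 1 - w : ℕ):ℤ) ∈ A ↔ f ((w:ℤ) + 2) ∈ A := by
      rw [he1] at hmt
      rw [he2] at hra
      exact hmt.trans hra
    have hrb := hRb (d - 1 - w) (t - 1 - (d - 1 - w)) (by omega) (by omega) (by omega)
    have hmt2 := hSmem _ (S.neg_mem hmemt) ((d:ℤ) + ((t - 1 - (d - 1 - w) : ℕ):ℤ))
    have he3 : ((d:ℤ) + ((t - 1 - (d - 1 - w) : ℕ):ℤ) + -(t:ℤ)) = ((w:ℕ):ℤ) := by omega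
    have rel2 : f ((d - 1 - w : ℕ):ℤ) ∈ A ↔ f ((w:ℕ):ℤ) ∈ A := by
      rw [he3] at hmt2
      exact hrb.trans hmt2
    have h1 : f x ∈ A ↔ f ((w:ℕ):ℤ) ∈ A := modS g2 hmemg2 _ _ ⟨-q, by linear_combination -hq⟩
    have h3 : f ((w:ℤ) + 2) ∈ A ↔ f (x + 2) ∈ A := modS g2 hmemg2 _ _ ⟨q, by linear_combination hq⟩
    exact h1.trans (rel2.symm.trans (rel1.trans h3))
  -- getting 2 ∈ S in all cases
  have twoS : (2*(t:ℤ) - 2) ∈ S → (2:ℤ) ∈ S := by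
    intro h
    have h2 := S.sub_mem (S.add_mem hmemt hmemt) h
    rwa [show ((t:ℤ) + t) - (2*t - 2) = 2 by ring] at h2
  have h2mem : (2:ℤ) ∈ S := by
    rcases le_or_gt t d with htd | hdt
    · refine twoS ?_
      have h := S.sub_mem (hSc (by omega)) (hSd htd)
      rwa [show ((d:ℤ) + t - 1) - ((d:ℤ) - t + 1) = 2*t - 2 by ring] at h
    · rcases le_or_gt (d + t) ℓ with hdtl | hlt
      · exact hS3 hdt hdtl
      · refine twoS (hmemS _ (fun x => ?_))
        have r1 := hrefl1 hdt hlt x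
        have r2 := hrefl2 hdt hlt (((d:ℤ) - t + 1) - x)
        rw [show ((d:ℤ) + t - 1) - (((d:ℤ) - t + 1) - x) = x + (2*t - 2) by ring] at r2
        exact r1.trans r2
  have h1mem : (1:ℤ) ∈ S := by
    obtain ⟨k, hk⟩ := hodd
    have h2k := S.zsmul_mem h2mem (k:ℤ)
    have h := S.sub_mem hmemt h2k
    rwa [show ((t:ℤ) - (k:ℤ) • (2:ℤ)) = 1 by rw [zsmul_eq_mul]; push_cast; omega] at h
  apply Set.eq_univ_of_forall
  intro v
  obtain ⟨n, rfl⟩ := hsurj v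
  obtain ⟨a0, ha0⟩ := hA
  obtain ⟨n0, hn0⟩ := hsurj a0
  have h := hSmem _ (S.zsmul_mem h1mem (n - n0)) n0
  rw [show n0 + (n - n0) • (1:ℤ) = n by rw [zsmul_eq_mul]; push_cast; ring] at h
  rw [hn0] at h
  exact h.mp ha0

end Core
end ThetaAux

/-- `F` is a theta graph of order `ℓ`: a (spanning) cycle on `ℓ` vertices together with a
single chord. -/
def IsThetaGraph {V : Type*} (F : SimpleGraph V) (ℓ : ℕ) : Prop :=
  ∃ (x : V) (c : F.Walk x x) (a b : V),
    c.IsCycle ∧ c.length = ℓ ∧ (∀ v, v ∈ c.support) ∧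
    F.Adj a b ∧ s(a, b) ∉ c.edges ∧
    (∀ e, e ∈ F.edgeSet ↔ e ∈ c.edges ∨ e = s(a, b))

open ThetaAux SimpleGraph in
/-- If `F` is a theta graph of order `ℓ`, `t` is odd with `1 ≤ t < ℓ`, `A` is a nonempty
vertex set such that every path of length `t` starting in `A` ends in `A`,
then `A` is the whole vertex set. -/
theorem stmt7 {V : Type*} (F : SimpleGraph V) (ℓ t : ℕ)
    (hF : IsThetaGraph F ℓ) (ht1 : 1 ≤ t) (ht2 : t < ℓ) (hodd : Odd t)
    (A : Set V) (hA : A.Nonempty)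
    (hpath : ∀ (u v : V) (p : F.Walk u v), p.IsPath → p.length = t → u ∈ A → v ∈ A) :
    A = Set.univ := by
  obtain ⟨x, c, a, b, hc, hlen, hsupp, hab, hnotc, -⟩ := hF
  have hl3 : 3 ≤ ℓ := hlen ▸ hc.three_le_length
  have hl0 : (0:ℤ) < (ℓ:ℤ) := by exact_mod_cast (by omega : 0 < ℓ)
  set f0 : ℤ → V := fun n => c.getVert ((n % (ℓ:ℤ)).toNat) with hf0
  have hmodfacts : ∀ n : ℤ, 0 ≤ n % (ℓ:ℤ) ∧ n % (ℓ:ℤ) < (ℓ:ℤ) :=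
    fun n => ⟨Int.emod_nonneg n (by omega), Int.emod_lt_of_pos n hl0⟩
  have per0 : ∀ m n : ℤ, m ≡ n [ZMOD (ℓ:ℤ)] → f0 m = f0 n := by
    intro m n h
    simp only [hf0]
    rw [(h : m % (ℓ:ℤ) = n % (ℓ:ℤ))]
  have mdvd : ∀ {m n : ℤ}, (ℓ:ℤ) ∣ n - m → f0 m = f0 n :=
    fun h => per0 _ _ (Int.modEq_iff_dvd.mpr h)
  have inj0 : ∀ m n : ℤ, f0 m = f0 n → m ≡ n [ZMOD (ℓ:ℤ)] := by
    intro m n h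
    have h1 := hmodfacts m
    have h2 := hmodfacts n
    have := cycle_getVert_inj hc (i := (m % (ℓ:ℤ)).toNat) (j := (n % (ℓ:ℤ)).toNat)
      (by rw [hlen]; omega) (by rw [hlen]; omega) h
    show m % (ℓ:ℤ) = n % (ℓ:ℤ)
    omega
  have hgl : c.getVert ℓ = x := by rw [← hlen]; exact Walk.getVert_length c
  have adjedge0 : ∀ n : ℤ, F.Adj (f0 n) (f0 (n+1)) ∧ s(f0 n, f0 (n+1)) ∈ c.edges := by
    intro n
    have h1 := hmodfacts n
    have h2 := hmodfacts (n+1)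
    have hstep : (n+1) % (ℓ:ℤ) = (n % (ℓ:ℤ) + 1) % (ℓ:ℤ) := by
      have h1 : (1:ℤ) % (ℓ:ℤ) = 1 := Int.emod_eq_of_lt (by norm_num) (by omega)
      rw [Int.add_emod, h1]
    rcases eq_or_lt_of_le (by omega : n % (ℓ:ℤ) + 1 ≤ (ℓ:ℤ)) with he | hlt
    · -- wrap-around : n % ℓ = ℓ - 1
      have hz : (n+1) % (ℓ:ℤ) = 0 := by rw [hstep, he, Int.emod_self]
      have hi : (n % (ℓ:ℤ)).toNat = ℓ - 1 := by omega
      have hadj := c.adj_getVert_succ (i := ℓ - 1) (by rw [hlen]; omega)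
      have hedge := edge_getVert_mem c (ℓ - 1) (by rw [hlen]; omega)
      rw [show ℓ - 1 + 1 = ℓ by omega, hgl] at hadj hedge
      have hx0 : c.getVert 0 = x := Walk.getVert_zero c
      simp only [hf0]
      rw [hz, hi]
      simpa [hx0] using ⟨hadj, hedge⟩
    · have hi : ((n+1) % (ℓ:ℤ)).toNat = (n % (ℓ:ℤ)).toNat + 1 := by
        rw [hstep, Int.emod_eq_of_lt (by omega) hlt]; omega
      have hadj := c.adj_getVert_succ (i := (n % (ℓ:ℤ)).toNat) (by rw [hlen]; omega)
      have hedge := edge_getVert_mem c ((n % (ℓ:ℤ)).toNat) (by rw [hlen]; omega)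
      simp only [hf0]
      rw [hi]
      exact ⟨hadj, hedge⟩
  have adj0 : ∀ n : ℤ, F.Adj (f0 n) (f0 (n+1)) := fun n => (adjedge0 n).1
  have edge0 : ∀ n : ℤ, s(f0 n, f0 (n+1)) ∈ c.edges := fun n => (adjedge0 n).2
  have surj0 : ∀ v : V, ∃ n : ℤ, f0 n = v := by
    intro v
    obtain ⟨n, hn, hnle⟩ := Walk.mem_support_iff_exists_getVert.mp (hsupp v)
    rw [hlen] at hnle
    rcases eq_or_lt_of_le hnle with heq | hlt
    · refine ⟨0, ?_⟩
      simp only [hf0]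
      rw [show (0:ℤ) % (ℓ:ℤ) = 0 from Int.zero_emod _]
      simp only [Int.toNat_zero]
      rw [Walk.getVert_zero, ← hgl, ← heq]
      exact hn
    · refine ⟨(n:ℤ), ?_⟩
      simp only [hf0]
      rw [Int.emod_eq_of_lt (by omega) (by exact_mod_cast hlt)]
      simpa using hn
  -- position the chord
  obtain ⟨na, hna⟩ := surj0 a
  obtain ⟨nb, hnb⟩ := surj0 b
  set d0 : ℕ := ((nb - na) % (ℓ:ℤ)).toNat with hd0def
  have hmf := hmodfacts (nb - na)
  have hd0c : ((d0:ℕ):ℤ) = (nb - na) % (ℓ:ℤ) := Int.toNat_of_nonneg hmf.1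
  have hd0lt : d0 < ℓ := by omega
  have hfb : f0 ((d0:ℤ) + na) = b := by
    rw [← hnb]
    refine mdvd ⟨(nb - na)/(ℓ:ℤ), ?_⟩
    rw [show nb - ((d0:ℤ) + na) = (nb - na) - (d0:ℤ) by ring, hd0c, Int.emod_def]
    ring
  have hd0ne0 : d0 ≠ 0 := by
    intro h0
    apply hab.ne
    rw [← hna, ← hnb]
    have hz : (nb - na) % (ℓ:ℤ) = 0 := by omega
    exact mdvd (Int.dvd_of_emod_eq_zero hz)
  have hd0ne1 : d0 ≠ 1 := by
    intro h1
    apply hnotc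
    have hb1 : f0 (na + 1) = b := by
      rw [← hfb]
      exact mdvd ⟨0, by omega⟩
    rw [← hna, ← hb1]
    exact edge0 na
  have hd0nel : d0 ≠ ℓ - 1 := by
    intro h1
    apply hnotc
    have ha1 : f0 (nb + 1) = a := by
      rw [← hna]
      have hq : nb - na - (ℓ:ℤ)*((nb - na)/(ℓ:ℤ)) = (ℓ:ℤ) - 1 := by
        rw [← Int.emod_def, ← hd0c]
        omega
      exact mdvd ⟨-((nb - na)/(ℓ:ℤ)) - 1, by linear_combination -hq⟩
    rw [show s(a,b) = s(b,a) from Sym2.eq_swap, ← hnb, ← ha1]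
    exact edge0 nb
  have hd02 : 2 ≤ d0 := by omega
  have hd0l2 : d0 ≤ ℓ - 2 := by omega
  rcases le_or_gt (2*d0) ℓ with hside | hside
  · -- use f1 = f0 (· + na), chord at (0, d0)
    refine core (F := F) (fun n => f0 (n + na)) ℓ t d0 A ?_ ?_ ?_ ?_ hd02 hside ht1 ht2 hodd ?_ hA hpath
    · intro m n h
      exact per0 _ _ (Int.ModEq.add_right na h)
    · intro m n h
      have := inj0 _ _ h
      have h2 := Int.ModEq.add_right (-na) this
      simpa [add_assoc] using h2
    · intro n
      have := adj0 (n + na)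
      rwa [show n + na + 1 = (n + 1) + na by ring] at this
    · show F.Adj (f0 (0 + na)) (f0 ((d0:ℤ) + na))
      rw [zero_add, hna, hfb]
      exact hab
    · intro v
      obtain ⟨n, hn⟩ := surj0 v
      exact ⟨n - na, by simpa using hn⟩
  · -- mirrored: f2 = f0 (na - ·), chord at (0, ℓ - d0)
    have hcast : (((ℓ - d0:ℕ)):ℤ) = (ℓ:ℤ) - (d0:ℤ) := by omega
    refine core (F := F) (fun n => f0 (na - n)) ℓ t (ℓ - d0) A ?_ ?_ ?_ ?_ (by omega) (by omega)
      ht1 ht2 hodd ?_ hA hpath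
    · intro m n h
      exact per0 _ _ (Int.ModEq.sub_left na h)
    · intro m n h
      have := inj0 _ _ h
      have h2 := Int.ModEq.sub_left 0 this
      have h3 := Int.ModEq.add_right na h2
      simpa [sub_sub_cancel] using (h3 : (0 - (na - m) + na) ≡ (0 - (na - n) + na) [ZMOD (ℓ:ℤ)])
    · intro n
      have := (adj0 (na - n - 1)).symm
      rwa [show na - n - 1 + 1 = na - n by ring, show na - n - 1 = na - (n + 1) by ring] at this
    · show F.Adj (f0 (na - 0)) (f0 (na - ((ℓ - d0:ℕ):ℤ)))
      have he : f0 (na - ((ℓ - d0:ℕ):ℤ)) = b := by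
        rw [← hfb]
        refine mdvd ⟨1, ?_⟩
        rw [hcast]
        ring
      rw [sub_zero, hna, he]
      exact hab
    · intro v
      obtain ⟨n, hn⟩ := surj0 v
      exact ⟨na - n, by simpa using hn⟩
end

section
/- If a graph G on n vertices contains no theta graph of order at least ℓ (ℓ ≥ 4) as a subgraph, then G has at most (ℓ-2)n edges. -/
/-- `G` contains a theta graph of order `m`: a cycle on `m` vertices plus a chord. -/
def HasThetaOfOrder {V : Type*} (G : SimpleGraph V) (m : ℕ) : Prop :=
  ∃ (x : V) (c : G.Walk x x) (a b : V),
    c.IsCycle ∧ c.length = m ∧ a ∈ c.support ∧ b ∈ c.support ∧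
    G.Adj a b ∧ s(a, b) ∉ c.edges

open List SimpleGraph SimpleGraph.Walk

set_option linter.unusedSectionVars false
section helpers
variable {V : Type*} {G : SimpleGraph V} [DecidableEq V]

lemma takeUntil_cons_self {a c d : V} (h : G.Adj a c) (p : G.Walk c d)
    (hy : a ∈ (Walk.cons h p).support) :
    (Walk.cons h p).takeUntil a hy = Walk.nil := by
  simp [Walk.takeUntil]

lemma takeUntil_cons_ne {a c d y : V} (h : G.Adj a c) (p : G.Walk c d)
    (hy : y ∈ (Walk.cons h p).support) (hne : a ≠ y) (hy' : y ∈ p.support) :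
    (Walk.cons h p).takeUntil y hy = Walk.cons h (p.takeUntil y hy') := by
  simp only [Walk.takeUntil]
  rw [dif_neg hne]

lemma mem_support_of_cons {a c d y : V} {h : G.Adj a c} {p : G.Walk c d}
    (hy : y ∈ (Walk.cons h p).support) (hne : a ≠ y) : y ∈ p.support := by
  rw [Walk.support_cons, List.mem_cons] at hy
  rcases hy with h1 | h1
  · exact absurd h1.symm hne
  · exact h1

lemma length_takeUntil_eq {u v y : V} (p : G.Walk u v) (hy : y ∈ p.support) :
    (p.takeUntil y hy).length = p.support.idxOf y := by
  induction p with
  | nil =>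
    rename_i w
    have hyu : y = w := by simpa using hy
    subst hyu
    have h0 : ((Walk.nil : G.Walk y y).takeUntil y hy).length ≤ 0 :=
      Walk.length_takeUntil_le _ hy
    simp only [Walk.support_nil, List.idxOf_cons_self]
    omega
  | cons h p ih =>
    rename_i a c d
    by_cases hu : a = y
    · subst hu
      rw [takeUntil_cons_self]
      simp
    · have hy' : y ∈ p.support := mem_support_of_cons hy hu
      rw [takeUntil_cons_ne h p hy hu hy', Walk.length_cons, Walk.support_cons,
        List.idxOf_cons_ne _ hu, ih hy']
end helpers

section helpers2
variable {V : Type*} {G : SimpleGraph V} [DecidableEq V]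

lemma mem_takeUntil_of_indexOf_le {u v y b : V} (p : G.Walk u v) (hy : y ∈ p.support)
    (hb : b ∈ p.support) (hle : p.support.idxOf b ≤ p.support.idxOf y) :
    b ∈ (p.takeUntil y hy).support := by
  induction p with
  | nil =>
    rename_i w
    have hyu : y = w := by simpa using hy
    subst hyu
    have hbu : b = y := by simpa using hb
    subst hbu
    exact Walk.end_mem_support _
  | cons h p ih =>
    rename_i a c d
    by_cases hu : a = y
    · subst hu
      have hidx : (Walk.cons h p).support.idxOf a = 0 := by
        rw [Walk.support_cons]; exact List.idxOf_cons_self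
      have hb0 : (Walk.cons h p).support.idxOf b = 0 := by omega
      have : b = a := by
        have hlt : (Walk.cons h p).support.idxOf b < (Walk.cons h p).support.length :=
          List.idxOf_lt_length_iff.mpr hb
        have := List.idxOf_inj (y := a) hb |>.mp (by rw [hb0, hidx])
        exact this
      subst this
      exact Walk.end_mem_support _
    · have hy' : y ∈ p.support := mem_support_of_cons hy hu
      rw [takeUntil_cons_ne h p hy hu hy', Walk.support_cons, List.mem_cons]
      by_cases hba : b = a
      · exact Or.inl hba
      · have hb' : b ∈ p.support := mem_support_of_cons hb (fun e => hba e.symm)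
        refine Or.inr (ih hy' hb' ?_)
        rw [Walk.support_cons, List.idxOf_cons_ne _ hu,
          List.idxOf_cons_ne _ (fun e => hba e.symm)] at hle
        omega

lemma indexOf_eq_one_of_start_edge {u v z : V} {q : G.Walk u v} (hq : q.IsPath)
    (he : s(u, z) ∈ q.edges) : q.support.idxOf z = 1 := by
  cases q with
  | nil => simp at he
  | cons h p =>
    rename_i w
    rw [Walk.edges_cons, List.mem_cons] at he
    rw [Walk.cons_isPath_iff] at hq
    rcases he with he | he
    · rw [Sym2.eq_iff] at he
      rcases he with ⟨-, rfl⟩ | ⟨rfl, rfl⟩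
      · rw [Walk.support_cons, List.idxOf_cons_ne _ h.ne,
          p.support_eq_cons, List.idxOf_cons_self]
      · exact absurd rfl h.ne
    · exact absurd (Walk.fst_mem_support_of_mem_edges p he) hq.2

lemma indexOf_takeUntil_eq {u v y z : V} (p : G.Walk u v) (hy : y ∈ p.support)
    (hz : z ∈ (p.takeUntil y hy).support) :
    (p.takeUntil y hy).support.idxOf z = p.support.idxOf z := by
  conv_rhs => rw [← p.take_spec hy]
  rw [Walk.support_append, List.idxOf_append_of_mem hz]
end helpers2


lemma exists_theta {V : Type*} [Fintype V] [Nonempty V] (G : SimpleGraph V)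
    [DecidableRel G.Adj] (ℓ : ℕ)
    (hℓ : 4 ≤ ℓ) (hdeg : ∀ v, ℓ - 1 ≤ G.degree v) :
    ∃ m, ℓ ≤ m ∧ HasThetaOfOrder G m := by
  classical
  set P : Set ℕ := {n | ∃ (u v : V) (p : G.Walk u v), p.IsPath ∧ p.length = n} with hP
  have hPne : P.Nonempty := ⟨0, Classical.arbitrary V, Classical.arbitrary V, Walk.nil, by simp, rfl⟩
  have hPbdd : BddAbove P := by
    refine ⟨Fintype.card V, ?_⟩
    rintro n ⟨u, v, p, hp, rfl⟩
    exact le_of_lt hp.length_lt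
  obtain ⟨u, v, p, hp, hL⟩ : sSup P ∈ P := Nat.sSup_mem hPne hPbdd
  have hmax : ∀ (a b : V) (q : G.Walk a b), q.IsPath → q.length ≤ p.length := by
    intro a b q hq
    rw [hL]
    exact le_csSup hPbdd ⟨a, b, q, hq, rfl⟩
  -- all neighbors of u lie on p
  have hnbr : ∀ w, G.Adj u w → w ∈ p.support := by
    intro w hw
    by_contra hns
    have : (Walk.cons hw.symm p).IsPath := by
      rw [Walk.cons_isPath_iff]
      exact ⟨hp, hns⟩
    have := hmax _ _ _ this
    simp at this
  set idx : V → ℕ := fun w => p.support.idxOf w with hidx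
  have hinj : ∀ w₁ ∈ G.neighborFinset u, ∀ w₂ ∈ G.neighborFinset u,
      idx w₁ = idx w₂ → w₁ = w₂ := by
    intro w₁ h₁ w₂ h₂ he
    rw [mem_neighborFinset] at h₁ h₂
    exact (List.idxOf_inj (hnbr _ h₁)).mp he
  have hpos : ∀ w ∈ G.neighborFinset u, 1 ≤ idx w := by
    intro w hw
    rw [mem_neighborFinset] at hw
    have : idx w = p.support.idxOf w := rfl
    rw [hidx]
    simp only
    rw [p.support_eq_cons, List.idxOf_cons_ne _ hw.ne]
    omega
  set N := G.neighborFinset u with hN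
  have hNcard : ℓ - 1 ≤ N.card := by
    rw [hN, card_neighborFinset_eq_degree]; exact hdeg u
  have hNne : N.Nonempty := Finset.card_pos.mp (by omega)
  set T := N.image idx with hT
  have hTcard : T.card = N.card := Finset.card_image_of_injOn (fun a ha b hb => hinj a ha b hb)
  have hTne : T.Nonempty := hNne.image _
  set M := T.max' hTne with hM
  have hTsub : T ⊆ Finset.Icc 1 M := by
    intro t ht
    rw [Finset.mem_Icc]
    obtain ⟨w, hw, rfl⟩ := Finset.mem_image.mp ht
    exact ⟨hpos w hw, T.le_max' _ ht⟩
  have hMge : ℓ - 1 ≤ M := by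
    have := Finset.card_le_card hTsub
    rw [hTcard, Nat.card_Icc] at this
    omega
  obtain ⟨y, hyN, hyM⟩ := Finset.mem_image.mp (T.max'_mem hTne)
  have hadj_uy : G.Adj u y := (mem_neighborFinset G u y).mp hyN
  have hyp : y ∈ p.support := hnbr y hadj_uy
  -- choose a chord endpoint b
  have hbad : (N.filter (fun w => idx w ≤ 1 ∨ w = y)).card ≤ 2 := by
    have himg : (N.filter (fun w => idx w ≤ 1 ∨ w = y)).image idx ⊆ {1, idx y} := by
      intro t ht
      obtain ⟨w, hw, rfl⟩ := Finset.mem_image.mp ht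
      rw [Finset.mem_filter] at hw
      rcases hw.2 with h1 | rfl
      · have := hpos w hw.1
        simp [show idx w = 1 by omega]
      · simp
    have h1 : ((N.filter (fun w => idx w ≤ 1 ∨ w = y)).image idx).card ≤ 2 :=
      le_trans (Finset.card_le_card himg) ((Finset.card_insert_le _ _).trans (by simp))
    have h2 : (N.filter (fun w => idx w ≤ 1 ∨ w = y)).card
        = ((N.filter (fun w => idx w ≤ 1 ∨ w = y)).image idx).card := by
      rw [Finset.card_image_of_injOn]
      intro a ha b hb
      exact hinj a (Finset.mem_filter.mp ha).1 b (Finset.mem_filter.mp hb).1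
    omega
  have hbex : ∃ b ∈ N, ¬(idx b ≤ 1 ∨ b = y) := by
    by_contra hc
    push_neg at hc
    have : N.filter (fun w => idx w ≤ 1 ∨ w = y) = N := by
      apply Finset.filter_true_of_mem
      intro w hw
      exact hc w hw
    rw [this] at hbad
    omega
  obtain ⟨b, hbN, hbprop⟩ := hbex
  push_neg at hbprop
  obtain ⟨hb2', hbney⟩ := hbprop
  have hb2 : 2 ≤ idx b := by omega
  have hadj_ub : G.Adj u b := (mem_neighborFinset G u b).mp hbN
  have hbp : b ∈ p.support := hnbr b hadj_ub
  have hbM : idx b < M := by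
    have hle : idx b ≤ M := T.le_max' _ (Finset.mem_image_of_mem _ hbN)
    rcases lt_or_eq_of_le hle with h | h
    · exact h
    · exact absurd (hinj b hbN y hyN (by rw [h, hyM])) hbney
  -- the cycle
  set q := p.takeUntil y hyp with hq
  have hqpath : q.IsPath := hp.takeUntil hyp
  have hqlen : q.length = M := by rw [hq, length_takeUntil_eq]; exact hyM
  have huy : u ≠ y := by
    intro hE
    have h0 : idx u = 0 := by
      rw [hidx]; simp only
      rw [p.support_eq_cons]; exact List.idxOf_cons_self
    rw [← hE, h0] at hyM
    omega
  have hM3 : 3 ≤ M := by omega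
  have hchord1 : s(y, u) ∉ q.edges := by
    intro hmem
    have : s(u, y) ∈ q.edges := by rwa [Sym2.eq_swap]
    have h1 : q.support.idxOf y = 1 := indexOf_eq_one_of_start_edge hqpath this
    have h2 : q.support.idxOf y = p.support.idxOf y :=
      indexOf_takeUntil_eq p hyp (Walk.end_mem_support _)
    have : idx y = 1 := by rw [hidx]; simp only; rw [← h2, h1]
    omega
  set c := Walk.cons hadj_uy.symm q with hc
  have hcyc : c.IsCycle := (Walk.cons_isCycle_iff q hadj_uy.symm).mpr ⟨hqpath, hchord1⟩
  have hclen : c.length = M + 1 := by rw [hc, Walk.length_cons, hqlen]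
  have hbq : b ∈ q.support := mem_takeUntil_of_indexOf_le p hyp hbp (by
    have : p.support.idxOf y = M := hyM
    have : p.support.idxOf b = idx b := rfl
    omega)
  refine ⟨c.length, by omega, y, c, u, b, hcyc, rfl, ?_, ?_, hadj_ub, ?_⟩
  · rw [hc, Walk.support_cons, List.mem_cons]
    exact Or.inr (Walk.start_mem_support q)
  · rw [hc, Walk.support_cons, List.mem_cons]
    exact Or.inr hbq
  · rw [hc, Walk.edges_cons, List.mem_cons]
    rintro (hE | hE)
    · rw [Sym2.eq_iff] at hE
      rcases hE with ⟨rfl, -⟩ | ⟨-, rfl⟩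
      · exact huy rfl
      · exact hbney rfl
    · have h1 : q.support.idxOf b = 1 := indexOf_eq_one_of_start_edge hqpath hE
      have h2 : q.support.idxOf b = p.support.idxOf b := indexOf_takeUntil_eq p hyp hbq
      have : idx b = 1 := by rw [hidx]; simp only; rw [← h2, h1]
      omega

lemma hasTheta_map {V W : Type*} {G : SimpleGraph V} {G' : SimpleGraph W} (f : G ↪g G') {m : ℕ}
    (h : HasThetaOfOrder G m) : HasThetaOfOrder G' m := by
  obtain ⟨x, c, a, b, hc, hl, ha, hb, hab, hch⟩ := h
  refine ⟨f x, c.map f.toHom, f a, f b, hc.map f.injective,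
    by rw [Walk.length_map]; exact hl, ?_, ?_, f.map_adj_iff.mpr hab, ?_⟩
  · rw [Walk.support_map]; exact List.mem_map_of_mem ha
  · rw [Walk.support_map]; exact List.mem_map_of_mem hb
  · rw [Walk.edges_map]
    intro hmem
    obtain ⟨e, he, heq⟩ := List.mem_map.mp hmem
    have hinj : Function.Injective (⇑f.toHom) := f.injective
    have : e = s(a, b) := Sym2.map.injective hinj (by rw [heq, Sym2.map_pair_eq]; rfl)
    exact hch (this ▸ he)

lemma aux_bound : ∀ (n : ℕ) {V : Type u} [Fintype V] (G : SimpleGraph V) (ℓ : ℕ), 4 ≤ ℓ →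
    (∀ m, ℓ ≤ m → ¬ HasThetaOfOrder G m) → Fintype.card V = n →
    G.edgeSet.ncard ≤ (ℓ - 2) * n := by
  intro n
  induction n using Nat.strong_induction_on with
  | _ n ih =>
    intro V _ G ℓ hℓ h hcard
    classical
    rcases isEmpty_or_nonempty V with hV | hV
    · have he : G.edgeSet = ∅ := by
        ext e
        induction e using Sym2.ind with
        | _ a b => exact (hV.false a).elim
      simp [he]
    · by_cases hd : ∃ v, G.degree v ≤ ℓ - 2
      · obtain ⟨v, hv⟩ := hd
        set s : Set V := {v}ᶜ with hs
        set G' : SimpleGraph s := G.induce s with hG'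
        have h' : ∀ m, ℓ ≤ m → ¬ HasThetaOfOrder G' m := fun m hm ht =>
          h m hm (hasTheta_map (SimpleGraph.Embedding.induce s) ht)
        have hn1 : 1 ≤ n := by rw [← hcard]; exact Fintype.card_pos
        have hcards : Fintype.card s = n - 1 := by
          have h1 : Fintype.card s = Fintype.card {x : V // ¬ x = v} :=
            Fintype.card_congr (Equiv.subtypeEquivRight (fun x => by simp [hs]))
          have h2 : Fintype.card {x : V // ¬ x = v}
              = Fintype.card V - Fintype.card {x : V // x = v} :=
            Fintype.card_subtype_compl _
          rw [h1, h2, Fintype.card_subtype_eq, hcard]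
        have hIH : G'.edgeSet.ncard ≤ (ℓ - 2) * (n - 1) :=
          ih (n - 1) (by omega) G' ℓ hℓ h' hcards
        -- edge counting
        have hsplit : G.edgeFinset.card = (G.edgeFinset.filter (fun e => v ∈ e)).card +
            (G.edgeFinset.filter (fun e => ¬ v ∈ e)).card :=
          (Finset.card_filter_add_card_filter_not _).symm
        have hinc : (G.edgeFinset.filter (fun e => v ∈ e)).card = G.degree v := by
          rw [← incidenceFinset_eq_filter, card_incidenceFinset_eq_degree]
        have hsurj : (G.edgeFinset.filter (fun e => ¬ v ∈ e)).card ≤ G'.edgeFinset.card := by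
          apply Finset.card_le_card_of_surjOn (Sym2.map (Subtype.val : s → V))
          intro e he
          simp only [Finset.coe_filter, Set.mem_setOf_eq, mem_edgeFinset] at he
          obtain ⟨he1, he2⟩ := he
          induction e using Sym2.ind with
          | _ a b =>
            rw [Sym2.mem_iff] at he2
            push_neg at he2
            have ha : a ∈ s := by
              simp only [hs, Set.mem_compl_iff, Set.mem_singleton_iff]
              exact fun hE => he2.1 hE.symm
            have hb : b ∈ s := by
              simp only [hs, Set.mem_compl_iff, Set.mem_singleton_iff]
              exact fun hE => he2.2 hE.symm
            refine ⟨s(⟨a, ha⟩, ⟨b, hb⟩), ?_, ?_⟩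
            · simp only [Finset.mem_coe, mem_edgeFinset]
              rw [SimpleGraph.mem_edgeSet] at he1 ⊢
              exact he1
            · rw [Sym2.map_pair_eq]
        have hnc : G.edgeSet.ncard = G.edgeFinset.card := by
          rw [← SimpleGraph.coe_edgeFinset, Set.ncard_coe_finset]
        have hnc' : G'.edgeSet.ncard = G'.edgeFinset.card := by
          rw [← SimpleGraph.coe_edgeFinset, Set.ncard_coe_finset]
        obtain ⟨k, rfl⟩ : ∃ k, n = k + 1 := ⟨n - 1, by omega⟩
        have harith : (ℓ - 2) * (k + 1) = (ℓ - 2) * k + (ℓ - 2) := by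
          rw [Nat.mul_succ]
        rw [hnc, hsplit, hinc]
        rw [hnc'] at hIH
        simp only [Nat.add_sub_cancel] at hIH
        omega
      · push_neg at hd
        have hdeg : ∀ w, ℓ - 1 ≤ G.degree w := fun w => by have := hd w; omega
        obtain ⟨m, hm, htheta⟩ := exists_theta G ℓ hℓ hdeg
        exact absurd htheta (h m hm)

/-- If an `n`-vertex graph `G` contains no theta graph of order at least `ℓ` (`ℓ ≥ 4`),
then `G` has at most `(ℓ-2)·n` edges. -/
theorem stmt8 {V : Type*} [Fintype V] (G : SimpleGraph V) (ℓ : ℕ) (hℓ : 4 ≤ ℓ)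
    (h : ∀ m, ℓ ≤ m → ¬ HasThetaOfOrder G m) :
    G.edgeSet.ncard ≤ (ℓ - 2) * Fintype.card V :=
  aux_bound (Fintype.card V) G ℓ hℓ h rfl
end

section
/- Let G be a C_{2k+1}-free graph (k ≥ 2) with a vertex tripartition V₁ ∪ V₂ ∪ V₃ such that every edge of the subgraph G' lies in a triangle of G having one vertex in each part. Then each bipartite subgraph of G' induced between two of the parts contains no cycle of length 2k. -/
/-- The bipartite subgraph of `G'` induced between the parts `A` and `B`. -/
def bipBetween {V : Type*} (G' : SimpleGraph V) (A B : Finset V) : SimpleGraph V where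
  Adj u v := G'.Adj u v ∧ ((u ∈ A ∧ v ∈ B) ∨ (u ∈ B ∧ v ∈ A))
  symm := ⟨by
    rintro u v ⟨h1, h2⟩
    exact ⟨h1.symm, by tauto⟩⟩
  loopless := ⟨fun v h => G'.ne_of_adj h.1 rfl⟩

lemma bip_le {V : Type*} (G G' : SimpleGraph V) (A B : Finset V) (hsub : G' ≤ G) :
    bipBetween G' A B ≤ G := fun _ _ hab => hsub hab.1

lemma bip_support {V : Type*} (G' : SimpleGraph V) (A B : Finset V) {a b : V}
    (q : (bipBetween G' A B).Walk a b) (ha : a ∈ A ∨ a ∈ B) :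
    ∀ u ∈ q.support, u ∈ A ∨ u ∈ B := by
  induction q with
  | nil => simpa using ha
  | cons h q ih =>
    intro u hu
    rw [SimpleGraph.Walk.support_cons, List.mem_cons] at hu
    rcases hu with rfl | hu
    · exact ha
    · exact ih (by obtain ⟨-, hloc⟩ := h; tauto) u hu

lemma key {V : Type*} [DecidableEq V] (G G' : SimpleGraph V) (k : ℕ) (hk : 2 ≤ k)
    (hfree : CycleFree G (2 * k + 1))
    (A B C : Finset V)
    (hAB : Disjoint A B) (hAC : Disjoint A C) (hBC : Disjoint B C)
    (hsub : G' ≤ G)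
    (htri : ∀ u v : V, G'.Adj u v → ∃ w : V, G.Adj u w ∧ G.Adj v w ∧
      (({u, v, w} : Finset V) ∩ C).card = 1) :
    CycleFree (bipBetween G' A B) (2 * k) := by
  intro v c hc hlen
  cases c with
  | nil => simp at hlen; omega
  | @cons _ x _ h p =>
    obtain ⟨hp, hne⟩ := (SimpleGraph.Walk.cons_isCycle_iff p h).1 hc
    obtain ⟨hvx', hloc⟩ := h
    obtain ⟨w, hvw, hxw, h3⟩ := htri v x hvx'
    -- v, x ∉ C
    have hvC : v ∉ C := by
      rcases hloc with ⟨hv, _⟩ | ⟨hv, _⟩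
      · exact Finset.disjoint_left.1 hAC hv
      · exact Finset.disjoint_left.1 hBC hv
    have hxC : x ∉ C := by
      rcases hloc with ⟨_, hx⟩ | ⟨_, hx⟩
      · exact Finset.disjoint_left.1 hBC hx
      · exact Finset.disjoint_left.1 hAC hx
    have hwC : w ∈ C := by
      obtain ⟨u, hu⟩ := Finset.card_pos.1 (by omega : 0 < (({v, x, w} : Finset V) ∩ C).card)
      simp only [Finset.mem_inter, Finset.mem_insert, Finset.mem_singleton] at hu
      rcases hu with ⟨rfl | rfl | rfl, huC⟩
      · exact absurd huC hvC
      · exact absurd huC hxC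
      · exact huC
    have hwA : w ∉ A := Finset.disjoint_right.1 hAC hwC
    have hwB : w ∉ B := Finset.disjoint_right.1 hBC hwC
    have hwv : w ≠ v := by rintro rfl; exact hvC hwC
    have hwx : w ≠ x := by rintro rfl; exact hxC hwC
    have hvx : v ≠ x := by
      rcases hloc with ⟨hv, hx⟩ | ⟨hv, hx⟩ <;>
        (rintro rfl; exact Finset.disjoint_left.1 hAB (by assumption) (by assumption))
    have hep : ∀ e ∈ p.edges, e ∈ G.edgeSet := fun e he =>
      SimpleGraph.edgeSet_mono (bip_le G G' A B hsub) (p.edges_subset_edgeSet he)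
    set p' : G.Walk x v := p.transfer G hep with hp'def
    have hsupp : (p'.support = p.support) := SimpleGraph.Walk.support_transfer p hep
    have hwns : w ∉ p'.support := by
      rw [hsupp]
      intro hw
      rcases bip_support G' A B p (by tauto) w hw with h | h
      · exact hwA h
      · exact hwB h
    have hQ : (SimpleGraph.Walk.cons hxw.symm p').IsPath := by
      rw [SimpleGraph.Walk.cons_isPath_iff]
      exact ⟨hp.transfer hep, hwns⟩
    have hW : (SimpleGraph.Walk.cons hvw (SimpleGraph.Walk.cons hxw.symm p')).IsCycle := by
      rw [SimpleGraph.Walk.cons_isCycle_iff]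
      refine ⟨hQ, ?_⟩
      simp only [SimpleGraph.Walk.edges_cons, List.mem_cons]
      rintro (he | he)
      · rw [Sym2.eq_iff] at he
        rcases he with ⟨h1, _⟩ | ⟨h1, _⟩
        · exact hwv h1.symm
        · exact hvx h1
      · exact hwns (p'.snd_mem_support_of_mem_edges he)
    have hlength : p'.length = p.length := SimpleGraph.Walk.length_transfer p hep
    have := hfree v _ hW
    simp only [SimpleGraph.Walk.length_cons, SimpleGraph.Walk.length_transfer] at this
    replace hlen : p.length + 1 = 2 * k := hlen
    omega

/-- If `G` is `C_{2k+1}`-free with a tripartition `V₁ ∪ V₂ ∪ V₃` such that every edge of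
`G'` lies in a triangle of `G` having one vertex in each part, then each bipartite
subgraph of `G'` between two of the parts contains no cycle of length `2k`. -/
theorem stmt10 {V : Type*} [DecidableEq V] (G G' : SimpleGraph V) (k : ℕ) (hk : 2 ≤ k)
    (hfree : CycleFree G (2 * k + 1))
    (V₁ V₂ V₃ : Finset V)
    (hcover : ∀ v : V, v ∈ V₁ ∨ v ∈ V₂ ∨ v ∈ V₃)
    (hd12 : Disjoint V₁ V₂) (hd13 : Disjoint V₁ V₃) (hd23 : Disjoint V₂ V₃)
    (hsub : G' ≤ G)
    (htri : ∀ u v : V, G'.Adj u v → ∃ w : V, G.Adj u w ∧ G.Adj v w ∧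
      (({u, v, w} : Finset V) ∩ V₁).card = 1 ∧
      (({u, v, w} : Finset V) ∩ V₂).card = 1 ∧
      (({u, v, w} : Finset V) ∩ V₃).card = 1) :
    CycleFree (bipBetween G' V₁ V₂) (2 * k) ∧
      CycleFree (bipBetween G' V₁ V₃) (2 * k) ∧
      CycleFree (bipBetween G' V₂ V₃) (2 * k) := by
  refine ⟨?_, ?_, ?_⟩
  · exact key G G' k hk hfree V₁ V₂ V₃ hd12 hd13 hd23 hsub fun u v h => by
      obtain ⟨w, h1, h2, _, _, h5⟩ := htri u v h; exact ⟨w, h1, h2, h5⟩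
  · exact key G G' k hk hfree V₁ V₃ V₂ hd13 hd12 hd23.symm hsub fun u v h => by
      obtain ⟨w, h1, h2, _, h4, _⟩ := htri u v h; exact ⟨w, h1, h2, h4⟩
  · exact key G G' k hk hfree V₂ V₃ V₁ hd23 hd12.symm hd13.symm hsub fun u v h => by
      obtain ⟨w, h1, h2, h3, _, _⟩ := htri u v h; exact ⟨w, h1, h2, h3⟩
end

section
/- For k ≥ 2, the maximum number of triangles in an n-vertex graph with no cycle of length 2k satisfies t_{2k}(n) ≤ ((2k-3)/3)·ex(n, C_{2k}). -/
/-- The Turán number `ex(n, C_ℓ)`: the maximum number of edges of an `n`-vertex graph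
with no cycle of length `ℓ`. -/
noncomputable def exCycle (n ℓ : ℕ) : ℕ :=
  sSup {m | ∃ G : SimpleGraph (Fin n), CycleFree G ℓ ∧ G.edgeSet.ncard = m}

/-- `t_ℓ(n)`: the maximum number of triangles of an `n`-vertex graph with no cycle of
length `ℓ`. -/
noncomputable def triMax (n ℓ : ℕ) : ℕ :=
  sSup {m | ∃ G : SimpleGraph (Fin n), CycleFree G ℓ ∧ (G.cliqueSet 3).ncard = m}

open SimpleGraph

variable {V : Type*} {G : SimpleGraph V}

def EGwalk (c : ℕ → V) : (m : ℕ) → (∀ i < m, G.Adj (c i) (c (i+1))) → G.Walk (c 0) (c m)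
  | 0, _ => Walk.nil
  | (m+1), h => (EGwalk c m (fun i hi => h i (Nat.lt_succ_of_lt hi))).concat (h m (Nat.lt_succ_self m))

lemma EGwalk_length (c : ℕ → V) (m : ℕ) (h : ∀ i < m, G.Adj (c i) (c (i+1))) :
    (EGwalk c m h).length = m := by
  induction m with
  | zero => rfl
  | succ m ih => simp [EGwalk, Walk.length_concat, ih]

lemma EGwalk_support (c : ℕ → V) (m : ℕ) (h : ∀ i < m, G.Adj (c i) (c (i+1))) :
    (EGwalk c m h).support = (List.range (m+1)).map c := by
  induction m with
  | zero => rfl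
  | succ m ih => simp [EGwalk, Walk.support_concat, ih, List.range_succ]

lemma EGwalk_edges (c : ℕ → V) (m : ℕ) (h : ∀ i < m, G.Adj (c i) (c (i+1))) :
    (EGwalk c m h).edges = (List.range m).map (fun i => s(c i, c (i+1))) := by
  induction m with
  | zero => rfl
  | succ m ih => simp [EGwalk, Walk.edges_concat, ih, List.range_succ]

lemma EGcycle (c : ℕ → V) (m : ℕ) (hm : 2 ≤ m)
    (hadj : ∀ i < m, G.Adj (c i) (c (i+1))) (hwrap : G.Adj (c m) (c 0))
    (hinj : Set.InjOn c (Set.Iio (m+1 : ℕ))) :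
    ∃ (v : V) (w : G.Walk v v), w.IsCycle ∧ w.length = m + 1 := by
  refine ⟨c m, Walk.cons hwrap (EGwalk c m hadj), ?_, by simp [EGwalk_length]⟩
  rw [Walk.cons_isCycle_iff]
  constructor
  · rw [Walk.isPath_def, EGwalk_support]
    refine List.Nodup.map_on ?_ List.nodup_range
    intro x hx y hy hxy
    exact hinj (by simpa using List.mem_range.mp hx) (by simpa using List.mem_range.mp hy) hxy
  · rw [EGwalk_edges]
    intro hmem
    simp only [List.mem_map, List.mem_range] at hmem
    obtain ⟨i, hi, heq⟩ := hmem
    rw [Sym2.eq_iff] at heq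
    have hinj' : ∀ a b, a < m + 1 → b < m + 1 → c a = c b → a = b := fun a b ha hb =>
      hinj (by simpa using ha) (by simpa using hb)
    rcases heq with ⟨h1, h2⟩ | ⟨h1, h2⟩
    · have := hinj' i m (by omega) (by omega) h1
      omega
    · have e1 := hinj' (i+1) m (by omega) (by omega) h2
      have e2 := hinj' i 0 (by omega) (by omega) h1
      omega

open SimpleGraph Finset

variable {V : Type*}

def EGFPath (H : SimpleGraph V) (s : Finset V) (f : ℕ → V) (m : ℕ) : Prop :=
  (∀ i ≤ m, f i ∈ s) ∧ (∀ i < m, H.Adj (f i) (f (i+1))) ∧ Set.InjOn f (Set.Iio (m+1 : ℕ))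

lemma EGFPath.restrict {H : SimpleGraph V} {s : Finset V} {f : ℕ → V} {m q : ℕ}
    (h : EGFPath H s f m) (hq : q ≤ m) : EGFPath H s f q :=
  ⟨fun i hi => h.1 i (hi.trans hq), fun i hi => h.2.1 i (hi.trans_le hq),
    h.2.2.mono (fun x hx => by simp only [Set.mem_Iio] at hx ⊢; omega)⟩

lemma EGFPath.mono {H : SimpleGraph V} {s s' : Finset V} {f : ℕ → V} {m : ℕ}
    (h : EGFPath H s f m) (hs : s ⊆ s') : EGFPath H s' f m :=
  ⟨fun i hi => hs (h.1 i hi), h.2.1, h.2.2⟩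

theorem EGmain [DecidableEq V] (H : SimpleGraph V) [DecidableRel H.Adj] (q : ℕ) (hq : 1 ≤ q)
    (s : Finset V) (hnp : ∀ f, ¬ EGFPath H s f q) :
    ∑ v ∈ s, (s.filter (H.Adj v)).card ≤ (q - 1) * s.card := by
  induction s using Finset.strongInductionOn with
  | _ s ih =>
  rcases s.eq_empty_or_nonempty with rfl | hsne
  · simp
  by_cases hlow : ∃ v ∈ s, 2 * (s.filter (H.Adj v)).card ≤ q - 1
  · -- remove a low-degree vertex
    obtain ⟨v, hv, hvd⟩ := hlow
    set s' := s.erase v with hs'def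
    have hins : insert v s' = s := Finset.insert_erase hv
    have hvns' : v ∉ s' := Finset.notMem_erase v s
    have hvv : s.filter (H.Adj v) = s'.filter (H.Adj v) := by
      rw [← hins, Finset.filter_insert, if_neg (H.irrefl)]
    have h1 : ∀ u ∈ s', (s.filter (H.Adj u)).card
        = (s'.filter (H.Adj u)).card + (if H.Adj u v then 1 else 0) := by
      intro u hu
      rw [← hins, Finset.filter_insert]
      split_ifs with hadj
      · rw [Finset.card_insert_of_notMem (fun hc => hvns' (Finset.mem_of_mem_filter _ hc))]
      · rw [Nat.add_zero]
    have hsum : ∑ u ∈ s, (s.filter (H.Adj u)).card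
        = (∑ u ∈ s', (s'.filter (H.Adj u)).card) + 2 * (s.filter (H.Adj v)).card := by
      rw [← Finset.add_sum_erase s _ hv, ← hs'def]
      have e1 : ∑ u ∈ s', (s.filter (H.Adj u)).card
          = (∑ u ∈ s', (s'.filter (H.Adj u)).card) + ∑ u ∈ s', (if H.Adj u v then 1 else 0) := by
        rw [Finset.sum_congr rfl h1, Finset.sum_add_distrib]
      have e2 : ∑ u ∈ s', (if H.Adj u v then 1 else 0) = (s.filter (H.Adj v)).card := by
        rw [← Finset.card_filter, hvv]
        congr 1
        apply Finset.filter_congr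
        intro x _
        simp [adj_comm]
      rw [e1, e2]
      ring
    have hsub : s' ⊂ s := Finset.erase_ssubset hv
    have hnp' : ∀ f, ¬ EGFPath H s' f q := fun f hf => hnp f (hf.mono (Finset.erase_subset v s))
    have hih := ih s' hsub hnp'
    have hcard : s'.card + 1 = s.card := by
      rw [hs'def, Finset.card_erase_of_mem hv]
      have : 1 ≤ s.card := Finset.card_pos.mpr hsne
      omega
    have harith : (q - 1) * s'.card + (q - 1) = (q - 1) * s.card := by
      rw [← hcard, Nat.mul_add, Nat.mul_one]
    omega
  · -- min degree case
    push_neg at hlow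
    have hdeg : ∀ v ∈ s, q ≤ 2 * (s.filter (H.Adj v)).card := by
      intro v hv; have := hlow v hv; omega
    -- the set of path lengths
    set T : Set ℕ := {m | ∃ f, EGFPath H s f m} with hT
    have hTbd : ∀ m ∈ T, m + 1 ≤ q := by
      rintro m ⟨f, hf⟩
      by_contra hc
      exact hnp f (hf.restrict (by omega))
    have hTbdd : BddAbove T := ⟨q, fun m hm => by have := hTbd m hm; omega⟩
    have h1T : 1 ∈ T := by
      obtain ⟨v₀, hv₀⟩ := hsne
      have hd : 1 ≤ (s.filter (H.Adj v₀)).card := by have := hdeg v₀ hv₀; omega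
      obtain ⟨w, hw⟩ := Finset.card_pos.mp hd
      rw [Finset.mem_filter] at hw
      have hne : v₀ ≠ w := (hw.2).ne
      refine ⟨fun r => if r = 0 then v₀ else w, ?_, ?_, ?_⟩
      · intro i _; dsimp only; split <;> [exact hv₀; exact hw.1]
      · intro i hi
        have : i = 0 := by omega
        subst this; simpa using hw.2
      · intro a ha b hb hab
        simp only [Set.mem_Iio] at ha hb
        dsimp only at hab
        have ha' : a = 0 ∨ a = 1 := by omega
        have hb' : b = 0 ∨ b = 1 := by omega
        rcases ha' with rfl | rfl <;> rcases hb' with rfl | rfl <;> simp_all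
    set t := sSup T with htdef
    have htT : t ∈ T := Nat.sSup_mem ⟨1, h1T⟩ hTbdd
    obtain ⟨f, hf⟩ := htT
    have ht1 : 1 ≤ t := le_csSup hTbdd h1T
    have htq : t + 1 ≤ q := hTbd t ⟨f, hf⟩
    have hmax : ∀ g, ¬ EGFPath H s g (t + 1) := by
      intro g hg
      have : t + 1 ≤ t := le_csSup hTbdd ⟨g, hg⟩
      omega
    have hfinj : ∀ a ≤ t, ∀ b ≤ t, f a = f b → a = b := by
      intro a ha b hb hab
      exact hf.2.2 (by simp only [Set.mem_Iio]; omega) (by simp only [Set.mem_Iio]; omega) hab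
    -- all neighbors of f 0 on the path
    have N0 : ∀ w ∈ s, H.Adj (f 0) w → ∃ j, 1 ≤ j ∧ j ≤ t ∧ w = f j := by
      intro w hw hadj
      by_contra hno
      push_neg at hno
      apply hmax (fun r => if r = 0 then w else f (r - 1))
      refine ⟨?_, ?_, ?_⟩
      · intro i _; dsimp only; split
        · exact hw
        · exact hf.1 _ (by omega)
      · intro i hi; dsimp only
        rcases Nat.eq_zero_or_pos i with rfl | hipos
        · simpa using hadj.symm
        · rw [if_neg (by omega), if_neg (by omega)]
          have e : i + 1 - 1 = (i - 1) + 1 := by omega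
          rw [e]
          exact hf.2.1 (i - 1) (by omega)
      · intro a ha b hb hab
        simp only [Set.mem_Iio] at ha hb
        dsimp only at hab
        by_cases ha0 : a = 0 <;> by_cases hb0 : b = 0
        · omega
        · rw [if_pos ha0, if_neg hb0] at hab
          exfalso
          rcases Nat.eq_zero_or_pos (b - 1) with hb1 | hb1
          · rw [hb1] at hab; exact hadj.ne' hab
          · exact hno (b - 1) hb1 (by omega) hab
        · rw [if_neg ha0, if_pos hb0] at hab
          exfalso
          rcases Nat.eq_zero_or_pos (a - 1) with ha1 | ha1
          · rw [ha1] at hab; exact hadj.ne' hab.symm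
          · exact hno (a - 1) ha1 (by omega) hab.symm
        · rw [if_neg ha0, if_neg hb0] at hab
          have := hfinj (a - 1) (by omega) (b - 1) (by omega) hab
          omega
    have Nt : ∀ w ∈ s, H.Adj (f t) w → ∃ j, j < t ∧ w = f j := by
      intro w hw hadj
      by_contra hno
      push_neg at hno
      apply hmax (fun r => if r = t + 1 then w else f r)
      refine ⟨?_, ?_, ?_⟩
      · intro i _; dsimp only; split
        · exact hw
        · next h => exact hf.1 _ (by omega)
      · intro i hi; dsimp only
        by_cases hit : i = t
        · subst hit
          rw [if_neg (by omega), if_pos rfl]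
          exact hadj
        · rw [if_neg (by omega), if_neg (by omega)]
          exact hf.2.1 i (by omega)
      · intro a ha b hb hab
        simp only [Set.mem_Iio] at ha hb
        dsimp only at hab
        by_cases ha0 : a = t + 1 <;> by_cases hb0 : b = t + 1
        · omega
        · rw [if_pos ha0, if_neg hb0] at hab
          exfalso
          by_cases hbt : b = t
          · rw [hbt] at hab; exact hadj.ne' hab
          · exact hno b (by omega) hab
        · rw [if_neg ha0, if_pos hb0] at hab
          exfalso
          by_cases hat : a = t
          · rw [hat] at hab; exact hadj.ne' hab.symm
          · exact hno a (by omega) hab.symm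
        · rw [if_neg ha0, if_neg hb0] at hab
          exact hfinj a (by omega) b (by omega) hab
    -- pigeonhole
    set A : Finset ℕ := (Finset.range t).filter (fun i => H.Adj (f 0) (f (i + 1))) with hAdef
    set B : Finset ℕ := (Finset.range t).filter (fun i => H.Adj (f t) (f i)) with hBdef
    have hAcard : (s.filter (H.Adj (f 0))).card ≤ A.card := by
      refine le_trans (Finset.card_le_card ?_) (Finset.card_image_le (f := fun i => f (i + 1)))
      intro w hw
      rw [Finset.mem_filter] at hw
      obtain ⟨j, hj1, hjt, rfl⟩ := N0 w hw.1 hw.2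
      refine Finset.mem_image.mpr ⟨j - 1, ?_, by rw [show j - 1 + 1 = j by omega]⟩
      rw [hAdef, Finset.mem_filter, Finset.mem_range, show j - 1 + 1 = j by omega]
      exact ⟨by omega, hw.2⟩
    have hBcard : (s.filter (H.Adj (f t))).card ≤ B.card := by
      refine le_trans (Finset.card_le_card ?_) (Finset.card_image_le (f := fun i => f i))
      intro w hw
      rw [Finset.mem_filter] at hw
      obtain ⟨j, hjt, rfl⟩ := Nt w hw.1 hw.2
      refine Finset.mem_image.mpr ⟨j, ?_, rfl⟩
      rw [hBdef, Finset.mem_filter, Finset.mem_range]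
      exact ⟨hjt, hw.2⟩
    have hABq : q ≤ A.card + B.card := by
      have h0 := hdeg (f 0) (hf.1 0 (by omega))
      have ht' := hdeg (f t) (hf.1 t le_rfl)
      omega
    have hABsub : A ∪ B ⊆ Finset.range t := by
      rw [hAdef, hBdef]
      exact Finset.union_subset (Finset.filter_subset _ _) (Finset.filter_subset _ _)
    have hABne : (A ∩ B).Nonempty := by
      rw [← Finset.card_pos]
      have h1 := Finset.card_union_add_card_inter A B
      have h2 : (A ∪ B).card ≤ t := le_trans (Finset.card_le_card hABsub) (by simp)
      omega
    obtain ⟨i, hiAB⟩ := hABne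
    rw [Finset.mem_inter, hAdef, hBdef, Finset.mem_filter, Finset.mem_filter,
      Finset.mem_range] at hiAB
    obtain ⟨⟨hit, hA0⟩, _, hBt⟩ := hiAB
    -- cyclic ordering g
    set g : ℕ → V := fun r => if r ≤ i then f r else f (t + i + 1 - r) with hgdef
    have hg_mem : ∀ r ≤ t, g r ∈ s := by
      intro r hr
      rw [hgdef]; dsimp only; split
      · exact hf.1 r hr
      · exact hf.1 _ (by omega)
    have hgadj : ∀ r < t, H.Adj (g r) (g (r + 1)) := by
      intro r hr
      rw [hgdef]; dsimp only
      by_cases h1 : r + 1 ≤ i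
      · rw [if_pos (by omega), if_pos h1]
        exact hf.2.1 r (by omega)
      · by_cases h2 : r ≤ i
        · -- r = i
          rw [if_pos h2, if_neg h1]
          have : r = i := by omega
          subst this
          rw [show t + r + 1 - (r + 1) = t by omega]
          exact hBt.symm
        · rw [if_neg h2, if_neg h1]
          rw [show t + i + 1 - r = (t + i - r) + 1 by omega, show t + i + 1 - (r + 1) = t + i - r by omega]
          exact (hf.2.1 (t + i - r) (by omega)).symm
    have hgwrap : H.Adj (g t) (g 0) := by
      rw [hgdef]; dsimp only
      rw [if_neg (by omega), if_pos (by omega), show t + i + 1 - t = i + 1 by omega]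
      exact hA0.symm
    have hginj : ∀ a ≤ t, ∀ b ≤ t, g a = g b → a = b := by
      intro a ha b hb hab
      rw [hgdef] at hab; dsimp only at hab
      split_ifs at hab with h1 h2 h2
      · exact hfinj a (by omega) b (by omega) hab
      · have := hfinj a (by omega) (t + i + 1 - b) (by omega) hab; omega
      · have := hfinj (t + i + 1 - a) (by omega) b (by omega) hab; omega
      · have := hfinj (t + i + 1 - a) (by omega) (t + i + 1 - b) (by omega) hab; omega
    set S : Finset V := (Finset.range (t + 1)).image g with hSdef
    have hScard : S.card = t + 1 := by
      rw [hSdef, Finset.card_image_of_injOn, Finset.card_range]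
      intro a ha b hb hab
      rw [Finset.mem_coe, Finset.mem_range] at ha hb
      exact hginj a (by omega) b (by omega) hab
    have hSsub : S ⊆ s := by
      intro x hx
      rw [hSdef, Finset.mem_image] at hx
      obtain ⟨r, hr, rfl⟩ := hx
      exact hg_mem r (by rw [Finset.mem_range] at hr; omega)
    have hgmod : ∀ a : ℕ, H.Adj (g (a % (t + 1))) (g ((a + 1) % (t + 1))) := by
      intro a
      have hb : a % (t + 1) < t + 1 := Nat.mod_lt _ (by omega)
      obtain ⟨c, hc⟩ : ∃ c, a = (t + 1) * c + a % (t + 1) :=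
        ⟨a / (t + 1), by rw [Nat.div_add_mod]⟩
      by_cases hbt : a % (t + 1) = t
      · have : (a + 1) % (t + 1) = 0 := by
          have : a + 1 = (t + 1) * (c + 1) := by rw [Nat.mul_succ]; omega
          rw [this, Nat.mul_mod_right]
        rw [this, hbt]
        exact hgwrap
      · have : (a + 1) % (t + 1) = a % (t + 1) + 1 := by
          have e : a + 1 = (a % (t + 1) + 1) + (t + 1) * c := by omega
          rw [e, Nat.add_mul_mod_self_left, Nat.mod_eq_of_lt (by omega)]
        rw [this]
        exact hgadj _ (by omega)
    have hclosed : ∀ x ∈ S, ∀ w ∈ s, H.Adj x w → w ∈ S := by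
      intro x hx w hw hxw
      by_contra hwS
      rw [hSdef, Finset.mem_image] at hx
      obtain ⟨j, hjr, rfl⟩ := hx
      rw [Finset.mem_range] at hjr
      apply hmax (fun r => if r = 0 then w else g ((j + (r - 1)) % (t + 1)))
      refine ⟨?_, ?_, ?_⟩
      · intro r _; dsimp only; split
        · exact hw
        · exact hg_mem _ (Nat.lt_succ_iff.mp (Nat.mod_lt _ (by omega)))
      · intro r hr; dsimp only
        rcases Nat.eq_zero_or_pos r with rfl | hrpos
        · rw [if_pos rfl, if_neg (by omega)]
          rw [show j + (1 - 1) = j by omega, Nat.mod_eq_of_lt hjr]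
          exact hxw.symm
        · rw [if_neg (by omega), if_neg (by omega)]
          rw [show j + (r + 1 - 1) = (j + (r - 1)) + 1 by omega]
          exact hgmod (j + (r - 1))
      · intro a ha b hb hab
        simp only [Set.mem_Iio] at ha hb
        dsimp only at hab
        by_cases ha0 : a = 0 <;> by_cases hb0 : b = 0
        · omega
        · rw [if_pos ha0, if_neg hb0] at hab
          exact absurd (Finset.mem_image.mpr ⟨_, Finset.mem_range.mpr
            (Nat.mod_lt _ (show 0 < t + 1 by omega)), hab.symm⟩) hwS
        · rw [if_neg ha0, if_pos hb0] at hab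
          exact absurd (Finset.mem_image.mpr ⟨_, Finset.mem_range.mpr
            (Nat.mod_lt _ (show 0 < t + 1 by omega)), hab⟩) hwS
        · rw [if_neg ha0, if_neg hb0] at hab
          have hmlt : ∀ x : ℕ, (j + x) % (t + 1) ≤ t := fun x =>
            Nat.lt_succ_iff.mp (Nat.mod_lt _ (by omega))
          have heq := hginj _ (hmlt (a - 1)) _ (hmlt (b - 1)) hab
          have hme : (a - 1) % (t + 1) = (b - 1) % (t + 1) := by
            have h1 : (j + (a - 1)) ≡ (j + (b - 1)) [MOD t + 1] := heq
            exact Nat.ModEq.add_left_cancel' j h1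
          rw [Nat.mod_eq_of_lt (by omega), Nat.mod_eq_of_lt (by omega)] at hme
          omega
    have hSdegle : ∀ x ∈ S, (s.filter (H.Adj x)).card ≤ t := by
      intro x hx
      have hsub2 : s.filter (H.Adj x) ⊆ S.erase x := by
        intro w hw
        rw [Finset.mem_filter] at hw
        exact Finset.mem_erase.mpr ⟨hw.2.ne', hclosed x hx w hw.1 hw.2⟩
      calc (s.filter (H.Adj x)).card ≤ (S.erase x).card := Finset.card_le_card hsub2
        _ = S.card - 1 := Finset.card_erase_of_mem hx
        _ = t := by omega
    have hout : ∀ u ∈ s \ S, s.filter (H.Adj u) = (s \ S).filter (H.Adj u) := by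
      intro u hu
      rw [Finset.mem_sdiff] at hu
      apply Finset.Subset.antisymm
      · intro w hw
        rw [Finset.mem_filter] at hw
        rw [Finset.mem_filter, Finset.mem_sdiff]
        refine ⟨⟨hw.1, fun hwS => ?_⟩, hw.2⟩
        exact hu.2 (hclosed w hwS u hu.1 hw.2.symm)
      · exact Finset.filter_subset_filter _ (Finset.sdiff_subset)
    have hSne : S.Nonempty := by
      refine ⟨g 0, ?_⟩
      rw [hSdef]
      exact Finset.mem_image.mpr ⟨0, Finset.mem_range.mpr (by omega), rfl⟩
    have hssub : s \ S ⊂ s := Finset.sdiff_ssubset hSsub hSne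
    have hnp2 : ∀ f, ¬ EGFPath H (s \ S) f q := fun f hf =>
      hnp f (hf.mono (Finset.sdiff_subset))
    have hih := ih (s \ S) hssub hnp2
    have hsplit : ∑ v ∈ s, (s.filter (H.Adj v)).card
        = (∑ v ∈ s \ S, (s.filter (H.Adj v)).card) + ∑ v ∈ S, (s.filter (H.Adj v)).card :=
      (Finset.sum_sdiff hSsub).symm
    have hpart1 : ∑ v ∈ s \ S, (s.filter (H.Adj v)).card ≤ (q - 1) * (s \ S).card := by
      calc ∑ v ∈ s \ S, (s.filter (H.Adj v)).card
          = ∑ v ∈ s \ S, ((s \ S).filter (H.Adj v)).card :=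
            Finset.sum_congr rfl (fun v hv => by rw [hout v hv])
        _ ≤ (q - 1) * (s \ S).card := hih
    have hpart2 : ∑ v ∈ S, (s.filter (H.Adj v)).card ≤ S.card * (q - 1) := by
      calc ∑ v ∈ S, (s.filter (H.Adj v)).card ≤ ∑ _v ∈ S, (q - 1) :=
            Finset.sum_le_sum (fun v hv => le_trans (hSdegle v hv) (by omega))
        _ = S.card * (q - 1) := by rw [Finset.sum_const, smul_eq_mul]
    have hScards : S.card ≤ s.card := Finset.card_le_card hSsub
    have hsd : (s \ S).card = s.card - S.card := Finset.card_sdiff_of_subset hSsub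
    calc ∑ v ∈ s, (s.filter (H.Adj v)).card
        ≤ (q - 1) * (s \ S).card + S.card * (q - 1) := by omega
      _ = (q - 1) * s.card := by
          rw [hsd, mul_comm S.card, ← Nat.mul_add, Nat.sub_add_cancel hScards]

section Counting

theorem EGcount {n k : ℕ} (hk : 2 ≤ k) (G : SimpleGraph (Fin n))
    (hfree : CycleFree G (2 * k)) :
    3 * (G.cliqueSet 3).ncard ≤ (2 * k - 3) * G.edgeSet.ncard := by
  classical
  have hts : (G.cliqueSet 3).ncard = (G.cliqueFinset 3).card := by
    rw [← SimpleGraph.coe_cliqueFinset, Set.ncard_coe_finset]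
  have hes : G.edgeSet.ncard = G.edgeFinset.card := by
    rw [← SimpleGraph.coe_edgeFinset, Set.ncard_coe_finset]
  rw [hts, hes]
  set T := G.cliqueFinset 3 with hTdef
  have hsum3 : ∑ v : Fin n, (T.filter (fun t => v ∈ t)).card = 3 * T.card := by
    have h1 : ∀ v : Fin n, (T.filter (fun t => v ∈ t)).card
        = ∑ t ∈ T, if v ∈ t then 1 else 0 := fun v => Finset.card_filter _ _
    calc ∑ v : Fin n, (T.filter (fun t => v ∈ t)).card
        = ∑ v : Fin n, ∑ t ∈ T, if v ∈ t then 1 else 0 :=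
          Finset.sum_congr rfl (fun v _ => h1 v)
      _ = ∑ t ∈ T, ∑ v : Fin n, if v ∈ t then 1 else 0 := Finset.sum_comm
      _ = ∑ t ∈ T, (3 : ℕ) := by
          refine Finset.sum_congr rfl (fun t ht => ?_)
          rw [← Finset.card_filter]
          have he : Finset.univ.filter (fun v : Fin n => v ∈ t) = t := by
            ext x; simp
          rw [he]
          exact (SimpleGraph.mem_cliqueFinset_iff.mp ht).2
      _ = 3 * T.card := by rw [Finset.sum_const, smul_eq_mul, mul_comm]
  have hvert : ∀ v : Fin n,
      2 * (T.filter (fun t => v ∈ t)).card ≤ (2 * k - 3) * G.degree v := by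
    intro v
    set N := G.neighborFinset v with hNdef
    set P := (N ×ˢ N).filter (fun p => p.1 < p.2 ∧ G.Adj p.1 p.2) with hPdef
    set D := (N ×ˢ N).filter (fun p => G.Adj p.1 p.2) with hDdef
    have hTP : (T.filter (fun t => v ∈ t)).card ≤ P.card := by
      refine le_trans (Finset.card_le_card ?_)
        (Finset.card_image_le (f := fun p : Fin n × Fin n => insert v {p.1, p.2}))
      intro t ht
      rw [Finset.mem_filter] at ht
      obtain ⟨ht, hvt⟩ := ht
      have hclq := SimpleGraph.mem_cliqueFinset_iff.mp ht
      have hcard2 : (t.erase v).card = 2 := by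
        rw [Finset.card_erase_of_mem hvt, hclq.2]
      obtain ⟨a, b, hab, herase⟩ := Finset.card_eq_two.mp hcard2
      have ha : a ∈ t.erase v := by rw [herase]; simp
      have hb : b ∈ t.erase v := by rw [herase]; simp
      have hat : a ∈ t := Finset.mem_of_mem_erase ha
      have hbt : b ∈ t := Finset.mem_of_mem_erase hb
      have hva : G.Adj v a :=
        hclq.1 (Finset.mem_coe.mpr hvt) (Finset.mem_coe.mpr hat)
          (Finset.ne_of_mem_erase ha).symm
      have hvb : G.Adj v b :=
        hclq.1 (Finset.mem_coe.mpr hvt) (Finset.mem_coe.mpr hbt)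
          (Finset.ne_of_mem_erase hb).symm
      have hadjab : G.Adj a b :=
        hclq.1 (Finset.mem_coe.mpr hat) (Finset.mem_coe.mpr hbt) hab
      have htrec : t = insert v {a, b} := by
        rw [← herase, Finset.insert_erase hvt]
      rcases lt_or_gt_of_ne hab with hlt | hgt
      · refine Finset.mem_image.mpr ⟨(a, b), ?_, ?_⟩
        · rw [hPdef, Finset.mem_filter, Finset.mem_product]
          exact ⟨⟨SimpleGraph.mem_neighborFinset _ _ _ |>.mpr hva,
            SimpleGraph.mem_neighborFinset _ _ _ |>.mpr hvb⟩, hlt, hadjab⟩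
        · exact htrec.symm
      · refine Finset.mem_image.mpr ⟨(b, a), ?_, ?_⟩
        · rw [hPdef, Finset.mem_filter, Finset.mem_product]
          exact ⟨⟨SimpleGraph.mem_neighborFinset _ _ _ |>.mpr hvb,
            SimpleGraph.mem_neighborFinset _ _ _ |>.mpr hva⟩, hgt, hadjab.symm⟩
        · rw [htrec, Finset.pair_comm]
    have hPD : 2 * P.card ≤ D.card := by
      have hsub : P ∪ P.image Prod.swap ⊆ D := by
        apply Finset.union_subset
        · intro p hp
          rw [hPdef, Finset.mem_filter] at hp
          rw [hDdef, Finset.mem_filter]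
          exact ⟨hp.1, hp.2.2⟩
        · intro p hp
          obtain ⟨q, hq, rfl⟩ := Finset.mem_image.mp hp
          rw [hPdef, Finset.mem_filter, Finset.mem_product] at hq
          rw [hDdef, Finset.mem_filter, Finset.mem_product]
          exact ⟨⟨hq.1.2, hq.1.1⟩, hq.2.2.symm⟩
      have hdisj : Disjoint P (P.image Prod.swap) := by
        rw [Finset.disjoint_left]
        intro p hp hp'
        obtain ⟨q, hq, hqp⟩ := Finset.mem_image.mp hp'
        rw [hPdef, Finset.mem_filter] at hp hq
        have h1 : p.1 < p.2 := hp.2.1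
        have h2 : q.1 < q.2 := hq.2.1
        have : q.2 = p.1 := congrArg Prod.fst hqp
        have : q.1 = p.2 := congrArg Prod.snd hqp
        omega
      calc 2 * P.card = P.card + (P.image Prod.swap).card := by
            rw [Finset.card_image_of_injective _ Prod.swap_injective]; ring
        _ = (P ∪ P.image Prod.swap).card := (Finset.card_union_of_disjoint hdisj).symm
        _ ≤ D.card := Finset.card_le_card hsub
    have hDsum : D.card = ∑ u ∈ N, (N.filter (G.Adj u)).card := by
      rw [Finset.card_eq_sum_card_fiberwise (f := Prod.fst) (t := N)
        (fun p hp => by simp only [Finset.mem_coe, hDdef, Finset.mem_filter, Finset.mem_product] at hp ⊢; exact hp.1.1)]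
      refine Finset.sum_congr rfl (fun u hu => ?_)
      refine Finset.card_bij (fun p _ => p.2) ?_ ?_ ?_
      · intro p hp
        rw [Finset.mem_filter] at hp
        have hp' := hp.1
        rw [hDdef, Finset.mem_filter, Finset.mem_product] at hp'
        show p.2 ∈ N.filter (G.Adj u)
        rw [Finset.mem_filter]
        refine ⟨hp'.1.2, ?_⟩
        rw [← hp.2]
        exact hp'.2
      · intro p hp p' hp' hpp
        rw [Finset.mem_filter] at hp hp'
        have h1 : p.1 = p'.1 := by rw [hp.2, hp'.2]
        have h2 : p.2 = p'.2 := hpp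
        exact Prod.ext_iff.mpr ⟨h1, h2⟩
      · intro w hw
        rw [Finset.mem_filter] at hw
        refine ⟨(u, w), ?_, rfl⟩
        rw [Finset.mem_filter, hDdef, Finset.mem_filter, Finset.mem_product]
        exact ⟨⟨⟨hu, hw.1⟩, hw.2⟩, rfl⟩
    have hEG : ∑ u ∈ N, (N.filter (G.Adj u)).card ≤ (2 * k - 2 - 1) * N.card := by
      refine EGmain G (2 * k - 2) (by omega) N ?_
      intro f hf
      have hmemN : ∀ i ≤ 2 * k - 2, G.Adj v (f i) := fun i hi =>
        (SimpleGraph.mem_neighborFinset _ _ _).mp (hf.1 i hi)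
      set c : ℕ → Fin n := fun r => if r = 0 then v else f (r - 1) with hcdef
      have hcadj : ∀ i < 2 * k - 1, G.Adj (c i) (c (i + 1)) := by
        intro i hi
        rw [hcdef]; dsimp only
        rcases Nat.eq_zero_or_pos i with rfl | hipos
        · rw [if_pos rfl, if_neg (by omega)]
          exact hmemN 0 (by omega)
        · rw [if_neg (by omega), if_neg (by omega)]
          rw [show i + 1 - 1 = (i - 1) + 1 by omega]
          exact hf.2.1 (i - 1) (by omega)
      have hcwrap : G.Adj (c (2 * k - 1)) (c 0) := by
        rw [hcdef]; dsimp only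
        rw [if_neg (by omega), if_pos rfl]
        exact (hmemN (2 * k - 1 - 1) (by omega)).symm
      have hcinj : Set.InjOn c (Set.Iio (2 * k - 1 + 1 : ℕ)) := by
        intro a ha b hb hab
        simp only [Set.mem_Iio] at ha hb
        rw [hcdef] at hab; dsimp only at hab
        by_cases ha0 : a = 0 <;> by_cases hb0 : b = 0
        · omega
        · rw [if_pos ha0, if_neg hb0] at hab
          exact absurd hab.symm (hmemN (b - 1) (by omega)).ne'
        · rw [if_neg ha0, if_pos hb0] at hab
          exact absurd hab (hmemN (a - 1) (by omega)).ne'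
        · rw [if_neg ha0, if_neg hb0] at hab
          have := hf.2.2 (show (a - 1 : ℕ) ∈ Set.Iio (2 * k - 2 + 1) from by
              simp only [Set.mem_Iio]; omega)
            (show (b - 1 : ℕ) ∈ Set.Iio (2 * k - 2 + 1) from by
              simp only [Set.mem_Iio]; omega) hab
          omega
      obtain ⟨x, w, hcyc, hlen⟩ := EGcycle (G := G) c (2 * k - 1) (by omega)
        hcadj hcwrap hcinj
      exact hfree x w hcyc (by omega)
    have hNdeg : N.card = G.degree v := G.card_neighborFinset_eq_degree v
    calc 2 * (T.filter (fun t => v ∈ t)).card ≤ 2 * P.card := by omega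
      _ ≤ D.card := hPD
      _ = ∑ u ∈ N, (N.filter (G.Adj u)).card := hDsum
      _ ≤ (2 * k - 2 - 1) * N.card := hEG
      _ = (2 * k - 3) * G.degree v := by
          rw [hNdeg, show 2 * k - 2 - 1 = 2 * k - 3 from by omega]
  have hfinal : 2 * (3 * T.card) ≤ (2 * k - 3) * (2 * G.edgeFinset.card) := by
    calc 2 * (3 * T.card) = ∑ v : Fin n, 2 * (T.filter (fun t => v ∈ t)).card := by
          rw [← Finset.mul_sum, hsum3]
      _ ≤ ∑ v : Fin n, (2 * k - 3) * G.degree v := Finset.sum_le_sum (fun v _ => hvert v)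
      _ = (2 * k - 3) * ∑ v : Fin n, G.degree v := by rw [Finset.mul_sum]
      _ = (2 * k - 3) * (2 * G.edgeFinset.card) := by
          rw [SimpleGraph.sum_degrees_eq_twice_card_edges]
  have hre : (2 * k - 3) * (2 * G.edgeFinset.card) = 2 * ((2 * k - 3) * G.edgeFinset.card) := by
    ring
  rw [hre] at hfinal
  omega

end Counting

/-- `t_{2k}(n) ≤ ((2k-3)/3)·ex(n, C_{2k})` for `k ≥ 2`. -/
theorem stmt11 (n k : ℕ) (hk : 2 ≤ k) :
    3 * triMax n (2 * k) ≤ (2 * k - 3) * exCycle n (2 * k) := by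
  classical
  have hbot : CycleFree (⊥ : SimpleGraph (Fin n)) (2 * k) := by
    intro v c hc
    exact absurd rfl hc.ne_bot
  have htne : {m | ∃ G : SimpleGraph (Fin n), CycleFree G (2 * k)
      ∧ (G.cliqueSet 3).ncard = m}.Nonempty :=
    ⟨((⊥ : SimpleGraph (Fin n)).cliqueSet 3).ncard, ⊥, hbot, rfl⟩
  have htbdd : BddAbove {m | ∃ G : SimpleGraph (Fin n), CycleFree G (2 * k)
      ∧ (G.cliqueSet 3).ncard = m} := by
    refine ⟨(Set.univ : Set (Finset (Fin n))).ncard, ?_⟩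
    rintro m ⟨G, _, rfl⟩
    exact Set.ncard_le_ncard (Set.subset_univ _) Set.finite_univ
  have hebdd : BddAbove {m | ∃ G : SimpleGraph (Fin n), CycleFree G (2 * k)
      ∧ G.edgeSet.ncard = m} := by
    refine ⟨(Set.univ : Set (Sym2 (Fin n))).ncard, ?_⟩
    rintro m ⟨G, _, rfl⟩
    exact Set.ncard_le_ncard (Set.subset_univ _) Set.finite_univ
  obtain ⟨G, hGfree, hGcard⟩ := Nat.sSup_mem htne htbdd
  rw [triMax, ← hGcard]
  calc 3 * (G.cliqueSet 3).ncard ≤ (2 * k - 3) * G.edgeSet.ncard := EGcount hk G hGfree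
    _ ≤ (2 * k - 3) * exCycle n (2 * k) := by
        apply Nat.mul_le_mul_left
        exact le_csSup hebdd ⟨G, hGfree, rfl⟩
end
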